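/- arXiv:2102.09901 — 3 statements merged into one kernel-verified Lean document; each statement's English description precedes it below -/
import Mathlib

section
/- The bicircular matroid M_{f_{1,0}}(K_{m,n}), induced by f_{1,0}(F) = |V(F)|, is the unique maximal matroid on E(K_{m,n}) in which the edge set of every copy of K_{2,3} is a circuit, and val_{K_{2,3}} is its rank function. -/
open Set

variable {α : Type*}

/-- `C` is a circuit of `M`: a minimal dependent subset of the ground set. -/
def Matroid.IsCircuit' (M : Matroid α) (C : Set α) : Prop :=
  C ⊆ M.E ∧ ¬ M.Indep C ∧ ∀ e ∈ C, M.Indep (C \ {e})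

/-- `M` is an `X`-matroid on `E`: a matroid with ground set `E` in which every member of the
family `X` is a circuit. -/
def IsXMatroid (E : Set α) (X : Set (Set α)) (M : Matroid α) : Prop :=
  M.E = E ∧ ∀ C ∈ X, M.IsCircuit' C

/-- The union of a list of sets. -/
def unionList (S : List (Set α)) : Set α := ⋃ Y ∈ S, Y

/-- A proper `X`-sequence: a list of members of `X` such that no term is contained in the
union of the preceding terms. -/
def ProperSeq (X : Set (Set α)) (S : List (Set α)) : Prop :=
  (∀ Y ∈ S, Y ∈ X) ∧
  ∀ i : Fin S.length, 0 < i.1 → ¬ (S.get i ⊆ unionList (S.take i.1))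

/-- `val(F, S) = |F ∪ ⋃ S| - |S|`. -/
noncomputable def valSeq (F : Set α) (S : List (Set α)) : ℤ :=
  ((F ∪ unionList S).ncard : ℤ) - S.length

/-- `val_X(F)`: the minimum of `val(F, S)` over all proper `X`-sequences `S`. -/
noncomputable def valX (X : Set (Set α)) (F : Set α) : ℤ :=
  sInf {v : ℤ | ∃ S : List (Set α), ProperSeq X S ∧ v = valSeq F S}

/-- The rank of a set `F` in a matroid `M`: the largest size of an independent subset of `F`. -/
noncomputable def mrk (M : Matroid α) (F : Set α) : ℕ :=
  sSup {n : ℕ | ∃ I ⊆ F, M.Indep I ∧ I.ncard = n}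

/-- The weak order on matroids: `M ⪯ N` iff every independent set of `M` is independent in `N`. -/
def WeakLE (M N : Matroid α) : Prop := ∀ I : Set α, M.Indep I → N.Indep I

/-- The set of vertices incident to a set of edges. -/
def verts {V : Type*} (F : Set (Sym2 V)) : Set V := {v | ∃ e ∈ F, v ∈ e}

/-- The edge sets of matchings with exactly `k` edges in the complete graph `K_n`. -/
def matchingCopies (n k : ℕ) : Set (Set (Sym2 (Fin n))) :=
  {F | F ⊆ (⊤ : SimpleGraph (Fin n)).edgeSet ∧ F.ncard = k ∧
       ∀ e ∈ F, ∀ f ∈ F, e ≠ f → ∀ v : Fin n, v ∈ e → v ∉ f}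
/-- The edge sets of copies of the complete bipartite graph `K_{s,t}` in a graph `G`. -/
def bicliqueCopies {V : Type*} (G : SimpleGraph V) (s t : ℕ) : Set (Set (Sym2 V)) :=
  {F | ∃ A B : Set V, A.ncard = s ∧ B.ncard = t ∧ (∀ a ∈ A, ∀ b ∈ B, G.Adj a b) ∧
        F = {e | ∃ a ∈ A, ∃ b ∈ B, e = s(a, b)}}

section Verts

variable {V : Type*}

lemma mem_verts {F : Set (Sym2 V)} {v : V} : v ∈ verts F ↔ ∃ e ∈ F, v ∈ e := Iff.rfl

lemma verts_mono {F F' : Set (Sym2 V)} (h : F ⊆ F') : verts F ⊆ verts F' := by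
  rintro v ⟨e, he, hv⟩; exact ⟨e, h he, hv⟩

/-- bipartite-type edge sets -/
def biedges (A B : Set V) : Set (Sym2 V) := {e | ∃ a ∈ A, ∃ b ∈ B, e = s(a, b)}

lemma mem_biedges {A B : Set V} {z : Sym2 V} :
    z ∈ biedges A B ↔ ∃ a ∈ A, ∃ b ∈ B, z = s(a, b) := Iff.rfl

lemma biedges_comm (A B : Set V) : biedges A B = biedges B A := by
  ext z
  constructor <;> rintro ⟨a, ha, b, hb, rfl⟩ <;> exact ⟨b, hb, a, ha, Sym2.eq_swap⟩

lemma biedges_mono {A A' B B' : Set V} (hA : A ⊆ A') (hB : B ⊆ B') :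
    biedges A B ⊆ biedges A' B' := by
  rintro z ⟨a, ha, b, hb, rfl⟩; exact ⟨a, hA ha, b, hB hb, rfl⟩

lemma mem_biedges_iff {A B : Set V} (hdisj : Disjoint A B) {a b : V} (ha : a ∈ A) (hb : b ∈ B) :
    ∀ {A' B' : Set V}, A' ⊆ A → B' ⊆ B → (s(a, b) ∈ biedges A' B' ↔ a ∈ A' ∧ b ∈ B') := by
  intro A' B' hA' hB'
  constructor
  · rintro ⟨a', ha', b', hb', he⟩
    rw [Sym2.eq_iff] at he
    rcases he with ⟨rfl, rfl⟩ | ⟨rfl, rfl⟩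
    · exact ⟨ha', hb'⟩
    · exact absurd (hdisj.ne_of_mem ha (hB' hb')) (by simp)
  · rintro ⟨h1, h2⟩; exact ⟨a, h1, b, h2, rfl⟩

lemma verts_biedges {A B : Set V} (hA : A.Nonempty) (hB : B.Nonempty) :
    verts (biedges A B) = A ∪ B := by
  ext v
  constructor
  · rintro ⟨e, ⟨a, ha, b, hb, rfl⟩, hv⟩
    rcases Sym2.mem_iff.1 hv with rfl | rfl
    · exact Or.inl ha
    · exact Or.inr hb
  · rintro (hv | hv)
    · obtain ⟨b, hb⟩ := hB; exact ⟨s(v, b), ⟨v, hv, b, hb, rfl⟩, by simp⟩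
    · obtain ⟨a, ha⟩ := hA; exact ⟨s(a, v), ⟨a, ha, v, hv, rfl⟩, by simp⟩

lemma biedges_eq_image (A B : Set V) : biedges A B = (fun p : V × V => s(p.1, p.2)) '' (A ×ˢ B) := by
  ext z
  constructor
  · rintro ⟨a, ha, b, hb, rfl⟩; exact ⟨(a, b), ⟨ha, hb⟩, rfl⟩
  · rintro ⟨⟨a, b⟩, ⟨ha, hb⟩, rfl⟩; exact ⟨a, ha, b, hb, rfl⟩

lemma ncard_biedges {A B : Set V} (hdisj : Disjoint A B) (hA : A.Finite) (hB : B.Finite) :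
    (biedges A B).ncard = A.ncard * B.ncard := by
  rw [biedges_eq_image, Set.ncard_image_of_injOn, Set.ncard_eq_toFinset_card _ (hA.prod hB),
    Set.ncard_eq_toFinset_card _ hA, Set.ncard_eq_toFinset_card _ hB, ← Finset.card_product,
    Set.Finite.toFinset_prod]
  rintro ⟨a, b⟩ ⟨ha, hb⟩ ⟨a', b'⟩ ⟨ha', hb'⟩ he
  simp only [Sym2.eq_iff] at he
  rcases he with ⟨rfl, rfl⟩ | ⟨rfl, rfl⟩
  · rfl
  · exact absurd (hdisj.ne_of_mem ha' hb) (by simp)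

lemma ncard_le_of_injOn_verts [Finite V] {F J : Set (Sym2 V)} (φ : Sym2 V → V)
    (hφ : ∀ e ∈ F, φ e ∈ e) (hinj : InjOn φ F) (hJF : J ⊆ F) :
    J.ncard ≤ (verts J).ncard := by
  have h1 : φ '' J ⊆ verts J := by
    rintro v ⟨e, he, rfl⟩; exact ⟨e, he, hφ e (hJF he)⟩
  calc J.ncard = (φ '' J).ncard := (Set.ncard_image_of_injOn (hinj.mono hJF)).symm
    _ ≤ (verts J).ncard := Set.ncard_le_ncard h1 (Set.toFinite _)

end Verts

section Biclique

variable {V : Type*} [Finite V] {G : SimpleGraph V} {C : Set (Sym2 V)}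

lemma biclique_structure (hC : C ∈ bicliqueCopies G 2 3) :
    ∃ A B : Set V, A.ncard = 2 ∧ B.ncard = 3 ∧ Disjoint A B ∧
      (∀ a ∈ A, ∀ b ∈ B, G.Adj a b) ∧ C = biedges A B := by
  obtain ⟨A, B, hA, hB, hadj, rfl⟩ := hC
  refine ⟨A, B, hA, hB, ?_, hadj, rfl⟩
  rw [Set.disjoint_left]
  intro x hxA hxB
  exact (hadj x hxA x hxB).ne rfl

lemma biclique_card (hC : C ∈ bicliqueCopies G 2 3) :
    C.ncard = 6 ∧ (verts C).ncard = 5 := by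
  obtain ⟨A, B, hA, hB, hd, hadj, rfl⟩ := biclique_structure hC
  have hAne : A.Nonempty := Set.nonempty_of_ncard_ne_zero (by omega)
  have hBne : B.Nonempty := Set.nonempty_of_ncard_ne_zero (by omega)
  constructor
  · rw [ncard_biedges hd (Set.toFinite _) (Set.toFinite _), hA, hB]
  · rw [verts_biedges hAne hBne, Set.ncard_union_eq hd (Set.toFinite _) (Set.toFinite _), hA, hB]

lemma biclique_subset_edgeSet (hC : C ∈ bicliqueCopies G 2 3) : C ⊆ G.edgeSet := by
  obtain ⟨A, B, hA, hB, hadj, rfl⟩ := hC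
  rintro z ⟨a, ha, b, hb, rfl⟩
  exact hadj a ha b hb

lemma biclique_del_count (hC : C ∈ bicliqueCopies G 2 3) {e : Sym2 V} (he : e ∈ C) :
    ∀ J ⊆ C \ {e}, J.ncard ≤ (verts J).ncard := by
  obtain ⟨A, B, hA, hB, hd, hadj, rfl⟩ := biclique_structure hC
  intro J hJ
  rcases J.eq_empty_or_nonempty with rfl | hJne
  · simp
  set A' := A ∩ verts J with hA'def
  set B' := B ∩ verts J with hB'def
  have hJsub : J ⊆ biedges A' B' := by
    intro z hz
    obtain ⟨a, ha, b, hb, rfl⟩ := (hJ hz).1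
    exact ⟨a, ⟨ha, ⟨_, hz, by simp⟩⟩, b, ⟨hb, ⟨_, hz, by simp⟩⟩, rfl⟩
  have hd' : Disjoint A' B' := hd.mono inter_subset_left inter_subset_left
  have h1 : J.ncard ≤ A'.ncard * B'.ncard := by
    rw [← ncard_biedges hd' (Set.toFinite _) (Set.toFinite _)]
    exact Set.ncard_le_ncard hJsub (Set.toFinite _)
  have h5 : J.ncard ≤ 5 := by
    have : J.ncard ≤ (biedges A B \ {e}).ncard := Set.ncard_le_ncard hJ (Set.toFinite _)
    rwa [Set.ncard_diff_singleton_of_mem he,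
      ncard_biedges hd (Set.toFinite _) (Set.toFinite _), hA, hB] at this
  have hvJ : verts J = A' ∪ B' := by
    apply Set.Subset.antisymm
    · rintro v ⟨z, hz, hv⟩
      obtain ⟨a, ha, b, hb, rfl⟩ := (hJ hz).1
      rcases Sym2.mem_iff.1 hv with rfl | rfl
      · exact Or.inl ⟨ha, ⟨_, hz, by simp⟩⟩
      · exact Or.inr ⟨hb, ⟨_, hz, by simp⟩⟩
    · rintro v (hv | hv)
      · exact hv.2
      · exact hv.2
  have hvcard : (verts J).ncard = A'.ncard + B'.ncard := by
    rw [hvJ, Set.ncard_union_eq hd' (Set.toFinite _) (Set.toFinite _)]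
  have hA'le : A'.ncard ≤ 2 := hA ▸ Set.ncard_le_ncard inter_subset_left (Set.toFinite _)
  have hB'le : B'.ncard ≤ 3 := hB ▸ Set.ncard_le_ncard inter_subset_left (Set.toFinite _)
  have hA'pos : 1 ≤ A'.ncard := by
    obtain ⟨z, hz⟩ := hJne
    obtain ⟨a, ha, b, hb, rfl⟩ := (hJ hz).1
    have : a ∈ A' := ⟨ha, ⟨_, hz, by simp⟩⟩
    exact (Set.ncard_pos (Set.toFinite _)).2 ⟨a, this⟩
  have hB'pos : 1 ≤ B'.ncard := by
    obtain ⟨z, hz⟩ := hJne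
    obtain ⟨a, ha, b, hb, rfl⟩ := (hJ hz).1
    have : b ∈ B' := ⟨hb, ⟨_, hz, by simp⟩⟩
    exact (Set.ncard_pos (Set.toFinite _)).2 ⟨b, this⟩
  rw [hvcard]
  interval_cases h1 : A'.ncard <;> interval_cases h2 : B'.ncard <;> omega

lemma biclique_isCircuit {M : Matroid (Sym2 V)} (hME : M.E = G.edgeSet)
    (hMI : ∀ F : Set (Sym2 V), M.Indep F ↔ F ⊆ G.edgeSet ∧
      ∀ I ⊆ F, I.Nonempty → I.ncard ≤ (verts I).ncard)
    (hC : C ∈ bicliqueCopies G 2 3) : M.IsCircuit' C := by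
  obtain ⟨hc6, hc5⟩ := biclique_card hC
  refine ⟨hME ▸ biclique_subset_edgeSet hC, ?_, ?_⟩
  · intro hI
    have := ((hMI C).1 hI).2 C (subset_refl _) (Set.nonempty_of_ncard_ne_zero (by omega))
    omega
  · intro e he
    rw [hMI]
    exact ⟨(Set.diff_subset.trans (biclique_subset_edgeSet hC)),
      fun J hJ _ => biclique_del_count hC he J hJ⟩
end Biclique

section Mrk

variable {α : Type*} [Finite α] {N : Matroid α} {F A Y I : Set α} {e : α}

lemma mrk_set_nonempty (N : Matroid α) (F : Set α) :
    {n : ℕ | ∃ I ⊆ F, N.Indep I ∧ I.ncard = n}.Nonempty :=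
  ⟨0, ∅, empty_subset _, N.empty_indep, Set.ncard_empty _⟩

lemma mrk_set_bddAbove (N : Matroid α) (F : Set α) :
    BddAbove {n : ℕ | ∃ I ⊆ F, N.Indep I ∧ I.ncard = n} := by
  refine ⟨F.ncard, ?_⟩
  rintro n ⟨I, hIF, _, rfl⟩
  exact Set.ncard_le_ncard hIF (Set.toFinite _)

lemma mrk_exists (N : Matroid α) (F : Set α) :
    ∃ I ⊆ F, N.Indep I ∧ I.ncard = mrk N F :=
  Nat.sSup_mem (mrk_set_nonempty N F) (mrk_set_bddAbove N F)

lemma ncard_le_mrk (hI : N.Indep I) (hIF : I ⊆ F) : I.ncard ≤ mrk N F :=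
  le_csSup (mrk_set_bddAbove N F) ⟨I, hIF, hI, rfl⟩

lemma mrk_le_ncard (N : Matroid α) (F : Set α) : mrk N F ≤ F.ncard := by
  obtain ⟨I, hIF, _, hcard⟩ := mrk_exists N F
  rw [← hcard]
  exact Set.ncard_le_ncard hIF (Set.toFinite _)

lemma mrk_mono (N : Matroid α) {F F' : Set α} (h : F ⊆ F') : mrk N F ≤ mrk N F' := by
  obtain ⟨I, hIF, hind, hcard⟩ := mrk_exists N F
  rw [← hcard]
  exact ncard_le_mrk hind (hIF.trans h)

lemma mrk_union_le (N : Matroid α) (A B : Set α) :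
    mrk N (A ∪ B) ≤ mrk N A + (B \ A).ncard := by
  obtain ⟨I, hIF, hind, hcard⟩ := mrk_exists N (A ∪ B)
  have h1 : (I ∩ A).ncard ≤ mrk N A := ncard_le_mrk (hind.subset inter_subset_left) inter_subset_right
  have h2 : (I \ A).ncard ≤ (B \ A).ncard :=
    Set.ncard_le_ncard (fun x hx => ⟨(hIF hx.1).resolve_left hx.2, hx.2⟩) (Set.toFinite _)
  have h3 := Set.ncard_inter_add_ncard_diff_eq_ncard I A (Set.toFinite _)
  omega

lemma mrk_lt_of_dep (hY : ¬ N.Indep Y) : mrk N Y < Y.ncard := by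
  obtain ⟨I, hIF, hind, hcard⟩ := mrk_exists N Y
  rw [← hcard]
  refine Set.ncard_lt_ncard (hIF.ssubset_of_ne ?_) (Set.toFinite _)
  rintro rfl; exact hY hind

private lemma aug_loop (hYd : ¬ N.Indep Y) (he : e ∈ Y) (hI : N.Indep I) :
    ∀ k : ℕ, ∀ B : Set α, N.Indep B → Y \ {e} ⊆ B → B ⊆ I ∪ (Y \ {e}) →
      I.ncard ≤ B.ncard + k →
      ∃ B' : Set α, N.Indep B' ∧ Y \ {e} ⊆ B' ∧ B' ⊆ I ∪ (Y \ {e}) ∧ I.ncard ≤ B'.ncard := by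
  intro k
  induction k with
  | zero => exact fun B h1 h2 h3 h4 => ⟨B, h1, h2, h3, by omega⟩
  | succ k ih =>
    intro B h1 h2 h3 h4
    by_cases hle : I.ncard ≤ B.ncard
    · exact ⟨B, h1, h2, h3, hle⟩
    push_neg at hle
    have hBe : B.encard < I.encard := by
      rw [(Set.toFinite B).encard_eq_coe, (Set.toFinite I).encard_eq_coe,
        ← Set.ncard_def, ← Set.ncard_def]
      exact_mod_cast hle
    obtain ⟨x, hx, hxind⟩ := h1.augment hI hBe
    have hxe : x ≠ e := by
      intro hxeq
      refine hYd (hxind.subset fun y hy => ?_)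
      by_cases hye : y = e
      · rw [hye, ← hxeq]; exact mem_insert _ _
      · exact mem_insert_of_mem _ (h2 ⟨hy, hye⟩)
    refine ih (insert x B) hxind (h2.trans (subset_insert _ _)) ?_ ?_
    · exact insert_subset (Or.inl hx.1) h3
    · rw [Set.ncard_insert_of_notMem hx.2 (Set.toFinite _)]; omega

lemma mrk_circuit_step (hYd : ¬ N.Indep Y) (hYe : N.Indep (Y \ {e})) (he : e ∈ Y) (A : Set α) :
    mrk N (A ∪ Y) ≤ mrk N (A ∪ (Y \ {e})) := by
  obtain ⟨I, hIF, hind, hcard⟩ := mrk_exists N (A ∪ Y)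
  obtain ⟨B, hB1, hB2, hB3, hB4⟩ := aug_loop hYd he hind I.ncard (Y \ {e}) hYe
    (subset_refl _) subset_union_right (by omega)
  have heB : e ∉ B := by
    intro heB
    refine hYd (hB1.subset fun y hy => ?_)
    by_cases hye : y = e
    · subst hye; exact heB
    · exact hB2 ⟨hy, hye⟩
  have hBsub : B ⊆ A ∪ (Y \ {e}) := by
    intro x hxB
    rcases hB3 hxB with hxI | hxY
    · rcases hIF hxI with hxA | hxY
      · exact Or.inl hxA
      · exact Or.inr ⟨hxY, by rintro rfl; exact heB hxB⟩
    · exact Or.inr hxY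
  calc mrk N (A ∪ Y) = I.ncard := hcard.symm
    _ ≤ B.ncard := hB4
    _ ≤ mrk N (A ∪ (Y \ {e})) := ncard_le_mrk hB1 hBsub
end Mrk

section Lists

variable {α : Type*} {X : Set (Set α)} {S : List (Set α)} {Y : Set α}

lemma mem_unionList {x : α} : x ∈ unionList S ↔ ∃ Y ∈ S, x ∈ Y := by
  simp [unionList]

lemma unionList_nil : unionList ([] : List (Set α)) = ∅ := by simp [unionList]

lemma unionList_append (S T : List (Set α)) :
    unionList (S ++ T) = unionList S ∪ unionList T := by
  ext x; simp [unionList, or_and_right, exists_or]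

lemma unionList_singleton : unionList [Y] = Y := by simp [unionList]

lemma properSeq_nil : ProperSeq X [] :=
  ⟨by simp, fun i => absurd i.2 (by simp)⟩

lemma ncard_union_eq_add_diff (A B : Set α) (hA : A.Finite) (hB : B.Finite) :
    (A ∪ B).ncard = A.ncard + (B \ A).ncard := by
  rw [← Set.ncard_union_eq disjoint_sdiff_right hA hB.diff, union_diff_self]

lemma properSeq_append_singleton (hS : ProperSeq X S) (hY : Y ∈ X)
    (h : ¬ Y ⊆ unionList S) : ProperSeq X (S ++ [Y]) := by
  constructor
  · intro Z hZ
    rcases List.mem_append.1 hZ with hZ | hZ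
    · exact hS.1 Z hZ
    · simp only [List.mem_singleton] at hZ; exact hZ ▸ hY
  · intro i hi
    have hlen : (S ++ [Y]).length = S.length + 1 := by simp
    by_cases hiS : i.1 < S.length
    · have hget : (S ++ [Y]).get i = S.get ⟨i.1, hiS⟩ := by
        simp [List.getElem_append_left hiS]
      have htake : (S ++ [Y]).take i.1 = S.take i.1 := by
        rw [List.take_append_of_le_length (le_of_lt hiS)]
      rw [hget, htake]
      exact hS.2 ⟨i.1, hiS⟩ hi
    · have hieq : i.1 = S.length := by have := i.2; omega
      have hget : (S ++ [Y]).get i = Y := by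
        simp [List.get_eq_getElem, hieq]
      have htake : (S ++ [Y]).take i.1 = S := by
        rw [hieq, List.take_left]
      rw [hget, htake]
      exact h

lemma ProperSeq.of_append_singleton (hS : ProperSeq X (S ++ [Y])) : ProperSeq X S := by
  constructor
  · exact fun Z hZ => hS.1 Z (List.mem_append.2 (Or.inl hZ))
  · intro i hi
    have hiS : i.1 < (S ++ [Y]).length := by have := i.2; simp
    have hget : (S ++ [Y]).get ⟨i.1, hiS⟩ = S.get i := by
      simp [List.getElem_append_left i.2]
    have htake : (S ++ [Y]).take i.1 = S.take i.1 := by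
      rw [List.take_append_of_le_length (le_of_lt i.2)]
    have := hS.2 ⟨i.1, hiS⟩ hi
    rwa [hget, htake] at this
  
lemma ProperSeq.mem_of_append_singleton (hS : ProperSeq X (S ++ [Y])) : Y ∈ X :=
  hS.1 Y (List.mem_append.2 (Or.inr (by simp)))

lemma ProperSeq.fresh_of_append_singleton (hS : ProperSeq X (S ++ [Y])) (hne : S ≠ []) :
    ¬ Y ⊆ unionList S := by
  have hiS : S.length < (S ++ [Y]).length := by simp
  have hget : (S ++ [Y]).get ⟨S.length, hiS⟩ = Y := by
    simp
  have htake : (S ++ [Y]).take S.length = S := List.take_left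
  have hpos : 0 < S.length := List.length_pos_iff.2 hne
  have := hS.2 ⟨S.length, hiS⟩ hpos
  rwa [hget, htake] at this
end Lists

section Nullity
variable {α : Type*} [Finite α] {N : Matroid α} {X : Set (Set α)}

lemma mrk_unionList_add_length_le (hX : ∀ C ∈ X, N.IsCircuit' C) (S : List (Set α))
    (hS : ProperSeq X S) : mrk N (unionList S) + S.length ≤ (unionList S).ncard := by
  induction S using List.reverseRecOn with
  | nil =>
    have := mrk_le_ncard N (unionList ([] : List (Set α)))
    simpa [unionList_nil] using this
  | append_singleton S Y ih =>
    have hYX : Y ∈ X := hS.mem_of_append_singleton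
    obtain ⟨hYE, hYdep, hYdel⟩ := hX Y hYX
    rcases eq_or_ne S [] with rfl | hne
    · have h1 : mrk N Y < Y.ncard := mrk_lt_of_dep hYdep
      simp only [List.nil_append, unionList_singleton, List.length_singleton]
      omega
    · have ihS := ih hS.of_append_singleton
      have hfresh := hS.fresh_of_append_singleton hne
      obtain ⟨e, heY, heU⟩ := not_subset.1 hfresh
      set U := unionList S with hU
      have hstep : mrk N (U ∪ Y) ≤ mrk N (U ∪ (Y \ {e})) :=
        mrk_circuit_step hYdep (hYdel e heY) heY U
      have h2 : mrk N (U ∪ (Y \ {e})) ≤ mrk N U + ((Y \ {e}) \ U).ncard := mrk_union_le N _ _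
      have hcomm : (Y \ {e}) \ U = (Y \ U) \ {e} := by
        rw [diff_diff_comm]
      have heYU : e ∈ Y \ U := ⟨heY, heU⟩
      have h3 : ((Y \ U) \ {e}).ncard = (Y \ U).ncard - 1 :=
        Set.ncard_diff_singleton_of_mem heYU
      have h4 : 1 ≤ (Y \ U).ncard := (Set.ncard_pos (Set.toFinite _)).2 ⟨e, heYU⟩
      have h5 : (U ∪ Y).ncard = U.ncard + (Y \ U).ncard :=
        ncard_union_eq_add_diff _ _ (Set.toFinite _) (Set.toFinite _)
      have h6 : unionList (S ++ [Y]) = U ∪ Y := by rw [unionList_append, unionList_singleton]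
      rw [h6, List.length_append, List.length_singleton]
      rw [hcomm, h3] at h2
      omega

lemma mrk_le_valSeq (hX : ∀ C ∈ X, N.IsCircuit' C) (F : Set α) (S : List (Set α))
    (hS : ProperSeq X S) : (mrk N F : ℤ) ≤ valSeq F S := by
  have h1 := mrk_unionList_add_length_le hX S hS
  set U := unionList S
  have h2 : mrk N F ≤ mrk N (U ∪ F) := mrk_mono N subset_union_right
  have h3 : mrk N (U ∪ F) ≤ mrk N U + (F \ U).ncard := mrk_union_le N _ _
  have h4 : (U ∪ F).ncard = U.ncard + (F \ U).ncard := ncard_union_eq_add_diff _ _ (Set.toFinite _) (Set.toFinite _)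
  have h5 : F ∪ U = U ∪ F := union_comm _ _
  rw [valSeq]
  rw [h5]
  push_cast
  omega
end Nullity

section Defc

variable {V : Type*} [Fintype V] [DecidableEq V]

/-- the maximum deficiency over subsets -/
noncomputable def defc (F : Set (Sym2 V)) : ℕ :=
  sSup {d : ℕ | ∃ J ⊆ F, (verts J).ncard + d ≤ J.ncard}

lemma defc_set_nonempty (F : Set (Sym2 V)) :
    {d : ℕ | ∃ J ⊆ F, (verts J).ncard + d ≤ J.ncard}.Nonempty :=
  ⟨0, ∅, empty_subset _, by
    have : verts (∅ : Set (Sym2 V)) = ∅ := by ext v; simp [verts]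
    simp [this]⟩

lemma defc_set_bddAbove (F : Set (Sym2 V)) :
    BddAbove {d : ℕ | ∃ J ⊆ F, (verts J).ncard + d ≤ J.ncard} := by
  refine ⟨F.ncard, ?_⟩
  rintro d ⟨J, hJF, h⟩
  have := Set.ncard_le_ncard hJF (Set.toFinite _)
  omega

lemma defc_exists (F : Set (Sym2 V)) :
    ∃ J ⊆ F, (verts J).ncard + defc F ≤ J.ncard :=
  Nat.sSup_mem (defc_set_nonempty F) (defc_set_bddAbove F)

lemma le_defc {F J : Set (Sym2 V)} (hJF : J ⊆ F) {d : ℕ}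
    (h : (verts J).ncard + d ≤ J.ncard) : d ≤ defc F :=
  le_csSup (defc_set_bddAbove F) ⟨J, hJF, h⟩

/-- upper bound: rank ≤ |F| - defc -/
lemma mrk_add_defc_le {G : SimpleGraph V} {M : Matroid (Sym2 V)}
    (hMI : ∀ F : Set (Sym2 V), M.Indep F ↔ F ⊆ G.edgeSet ∧
      ∀ I ⊆ F, I.Nonempty → I.ncard ≤ (verts I).ncard)
    (F : Set (Sym2 V)) : mrk M F + defc F ≤ F.ncard := by
  obtain ⟨I, hIF, hind, hcard⟩ := mrk_exists M F
  obtain ⟨J, hJF, hJd⟩ := defc_exists F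
  have h1 : (I ∩ J).ncard ≤ (verts J).ncard := by
    rcases (I ∩ J).eq_empty_or_nonempty with he | hne
    · simp [he]
    · calc (I ∩ J).ncard ≤ (verts (I ∩ J)).ncard :=
            ((hMI I).1 hind).2 _ inter_subset_left hne
        _ ≤ (verts J).ncard := Set.ncard_le_ncard (verts_mono inter_subset_right) (Set.toFinite _)
  have h2 : (I \ J).ncard ≤ (F \ J).ncard :=
    Set.ncard_le_ncard (fun x hx => ⟨hIF hx.1, hx.2⟩) (Set.toFinite _)
  have h3 := Set.ncard_inter_add_ncard_diff_eq_ncard I J (Set.toFinite _)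
  have h4 := Set.ncard_inter_add_ncard_diff_eq_ncard F J (Set.toFinite _)
  have h5 : (F ∩ J) = J := inter_eq_self_of_subset_right hJF
  rw [h5] at h4
  omega

/-- lower bound via Hall's theorem: |F| - defc ≤ rank -/
lemma le_mrk_add_defc {G : SimpleGraph V} {M : Matroid (Sym2 V)}
    (hMI : ∀ F : Set (Sym2 V), M.Indep F ↔ F ⊆ G.edgeSet ∧
      ∀ I ⊆ F, I.Nonempty → I.ncard ≤ (verts I).ncard)
    {F : Set (Sym2 V)} (hFE : F ⊆ G.edgeSet) : F.ncard ≤ mrk M F + defc F := by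
  classical
  set D := defc F with hD
  rcases F.eq_empty_or_nonempty with rfl | hFne
  · simp
  have hVne : Nonempty V := by
    obtain ⟨e, he⟩ := hFne
    exact ⟨e.out.1⟩
  obtain ⟨v0⟩ := hVne
  set Fs : Finset (Sym2 V) := F.toFinite.toFinset with hFs
  have hmemFs : ∀ {e : Sym2 V}, e ∈ Fs ↔ e ∈ F := fun {e} => Set.Finite.mem_toFinset _
  -- the Hall family
  set t : {e // e ∈ Fs} → Finset (V ⊕ Fin D) :=
    (fun i => Finset.univ.filter (fun x => Sum.elim (· ∈ i.1) (fun _ => True) x)) with ht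
  have hHall : ∀ s : Finset {e // e ∈ Fs}, s.card ≤ (s.biUnion t).card := by
    intro s
    rcases s.eq_empty_or_nonempty with rfl | hsne
    · simp
    obtain ⟨i0, hi0⟩ := hsne
    set J : Set (Sym2 V) := Subtype.val '' (↑s : Set {e // e ∈ Fs}) with hJ
    have hJF : J ⊆ F := by rintro e ⟨i, hi, rfl⟩; exact hmemFs.1 i.2
    have hcardJ : s.card = J.ncard := by
      rw [hJ, Set.ncard_image_of_injOn (Subtype.val_injective.injOn), Set.ncard_coe_finset]
    -- the biUnion contains all of verts J (as inl) and all dummies (as inr)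
    have hsub : ((verts J).toFinite.toFinset.image Sum.inl ∪
        (Finset.univ : Finset (Fin D)).image Sum.inr) ⊆ s.biUnion t := by
      intro x hx
      rcases Finset.mem_union.1 hx with hx | hx
      · obtain ⟨v, hv, rfl⟩ := Finset.mem_image.1 hx
        rw [Set.Finite.mem_toFinset] at hv
        obtain ⟨e, ⟨i, hi, rfl⟩, hve⟩ := hv
        exact Finset.mem_biUnion.2 ⟨i, hi, by simp [ht, hve]⟩
      · obtain ⟨d, _, rfl⟩ := Finset.mem_image.1 hx
        exact Finset.mem_biUnion.2 ⟨i0, hi0, by simp [ht]⟩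
    have hdisj : Disjoint ((verts J).toFinite.toFinset.image Sum.inl)
        ((Finset.univ : Finset (Fin D)).image Sum.inr) := by
      simp only [Finset.disjoint_left, Finset.mem_image]
      rintro x ⟨v, _, rfl⟩ ⟨d, _, h⟩
      exact Sum.inl_ne_inr h.symm
    have hcard1 : ((verts J).toFinite.toFinset.image Sum.inl ∪
        (Finset.univ : Finset (Fin D)).image Sum.inr).card = (verts J).ncard + D := by
      rw [Finset.card_union_of_disjoint hdisj, Finset.card_image_of_injective _ Sum.inl_injective,
        Finset.card_image_of_injective _ Sum.inr_injective,
        Set.ncard_eq_toFinset_card _ (Set.toFinite _)]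
      simp
    have hJd : J.ncard ≤ (verts J).ncard + D := by
      by_contra hlt
      push_neg at hlt
      have : D + 1 ≤ D := le_defc hJF (d := D + 1) (by omega)
      omega
    calc s.card = J.ncard := hcardJ
      _ ≤ (verts J).ncard + D := hJd
      _ = _ := hcard1.symm
      _ ≤ (s.biUnion t).card := Finset.card_le_card hsub
  obtain ⟨f, hfinj, hft⟩ := (Finset.all_card_le_biUnion_card_iff_exists_injective t).1 hHall
  -- extract the independent set
  set SI : Set {e // e ∈ Fs} := {i | ∃ v : V, f i = Sum.inl v} with hSI
  set I : Set (Sym2 V) := Subtype.val '' SI with hI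
  have hIF : I ⊆ F := by rintro e ⟨i, hi, rfl⟩; exact hmemFs.1 i.2
  -- φ : endpoint selector
  set φ : Sym2 V → V := fun e =>
    if h : e ∈ Fs then Sum.elim id (fun _ => v0) (f ⟨e, h⟩) else v0 with hφ
  have hφmem : ∀ e ∈ I, φ e ∈ e := by
    rintro e ⟨i, hi, rfl⟩
    obtain ⟨v, hv⟩ := hi
    have hfi := hft i
    rw [hv] at hfi
    simp only [ht, Finset.mem_filter] at hfi
    have : φ i.1 = v := by
      rw [hφ]
      simp only [i.2, dif_pos]
      rw [hv]; rfl
    rw [this]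
    exact hfi.2
  have hφinj : InjOn φ I := by
    rintro e ⟨i, hi, rfl⟩ e' ⟨i', hi', rfl⟩ heq
    obtain ⟨v, hv⟩ := hi
    obtain ⟨v', hv'⟩ := hi'
    have h1 : φ i.1 = v := by rw [hφ]; simp only [i.2, dif_pos]; rw [hv]; rfl
    have h2 : φ i'.1 = v' := by rw [hφ]; simp only [i'.2, dif_pos]; rw [hv']; rfl
    have hvv : v = v' := by rw [← h1, ← h2, heq]
    have : f i = f i' := by rw [hv, hv', hvv]
    exact congrArg Subtype.val (hfinj this)
  have hIind : M.Indep I := by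
    rw [hMI]
    refine ⟨hIF.trans hFE, fun J hJI _ => ncard_le_of_injOn_verts φ hφmem hφinj hJI⟩
  have hIcard : F.ncard ≤ I.ncard + D := by
    -- F \ I injects into Fin D
    have hFI : (F \ I).ncard ≤ D := by
      classical
      set g : Sym2 V → Fin D ⊕ Unit := fun e =>
        if h : e ∈ Fs then Sum.elim (fun _ => Sum.inr ()) (fun d => Sum.inl d) (f ⟨e, h⟩)
          else Sum.inr () with hg
      have hginj : InjOn g (F \ I) := by
        rintro e ⟨heF, heI⟩ e' ⟨heF', heI'⟩ heq
        have he : e ∈ Fs := hmemFs.2 heF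
        have he' : e' ∈ Fs := hmemFs.2 heF'
        have hd : ∃ d, f ⟨e, he⟩ = Sum.inr d := by
          rcases hfe : f ⟨e, he⟩ with v | d
          · exact absurd ⟨⟨e, he⟩, ⟨v, hfe⟩, rfl⟩ heI
          · exact ⟨d, rfl⟩
        have hd' : ∃ d, f ⟨e', he'⟩ = Sum.inr d := by
          rcases hfe : f ⟨e', he'⟩ with v | d
          · exact absurd ⟨⟨e', he'⟩, ⟨v, hfe⟩, rfl⟩ heI'
          · exact ⟨d, rfl⟩
        obtain ⟨d, hdq⟩ := hd
        obtain ⟨d', hdq'⟩ := hd'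
        have h1 : g e = Sum.inl d := by rw [hg]; simp only [he, dif_pos]; rw [hdq]; rfl
        have h2 : g e' = Sum.inl d' := by rw [hg]; simp only [he', dif_pos]; rw [hdq']; rfl
        rw [h1, h2] at heq
        have hdd : d = d' := Sum.inl.inj heq
        have : f ⟨e, he⟩ = f ⟨e', he'⟩ := by rw [hdq, hdq', hdd]
        exact congrArg Subtype.val (hfinj this)
      have himg : g '' (F \ I) ⊆ Sum.inl '' (Set.univ : Set (Fin D)) := by
        rintro x ⟨e, ⟨heF, heI⟩, rfl⟩
        have he : e ∈ Fs := hmemFs.2 heF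
        rcases hfe : f ⟨e, he⟩ with v | d
        · exact absurd ⟨⟨e, he⟩, ⟨v, hfe⟩, rfl⟩ heI
        · have : g e = Sum.inl d := by rw [hg]; simp only [he, dif_pos]; rw [hfe]; rfl
          rw [this]; exact ⟨d, trivial, rfl⟩
      calc (F \ I).ncard = (g '' (F \ I)).ncard := (Set.ncard_image_of_injOn hginj).symm
        _ ≤ (Sum.inl '' (Set.univ : Set (Fin D))).ncard := Set.ncard_le_ncard himg (Set.toFinite _)
        _ = (Set.univ : Set (Fin D)).ncard := Set.ncard_image_of_injective _ Sum.inl_injective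
        _ = D := by rw [Set.ncard_univ]; simp
    have := Set.ncard_inter_add_ncard_diff_eq_ncard F I (Set.toFinite _)
    have hFI2 : (F ∩ I) = I := inter_eq_self_of_subset_right hIF
    rw [hFI2] at this
    omega
  have := ncard_le_mrk hIind hIF
  omega
end Defc

section Constr

variable {V : Type*} [DecidableEq V] {G : SimpleGraph V}

lemma mem_biedges_of {A B : Set V} {a b : V} (ha : a ∈ A) (hb : b ∈ B) :
    s(a, b) ∈ biedges A B := ⟨a, ha, b, hb, rfl⟩

lemma not_mem_biedges_of {A B : Set V} {x y : V} (hx1 : x ∉ A) (hx2 : x ∉ B) :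
    s(x, y) ∉ biedges A B := by
  rintro ⟨a, ha, b, hb, he⟩
  rw [Sym2.eq_iff] at he
  rcases he with ⟨rfl, rfl⟩ | ⟨rfl, rfl⟩
  · exact hx1 ha
  · exact hx2 hb

lemma biedges_union_right (A B1 B2 : Set V) :
    biedges A (B1 ∪ B2) = biedges A B1 ∪ biedges A B2 := by
  ext z
  constructor
  · rintro ⟨a, ha, b, (hb | hb), rfl⟩
    · exact Or.inl ⟨a, ha, b, hb, rfl⟩
    · exact Or.inr ⟨a, ha, b, hb, rfl⟩
  · rintro (⟨a, ha, b, hb, rfl⟩ | ⟨a, ha, b, hb, rfl⟩)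
    · exact ⟨a, ha, b, Or.inl hb, rfl⟩
    · exact ⟨a, ha, b, Or.inr hb, rfl⟩

lemma biedges_union_left (A1 A2 B : Set V) :
    biedges (A1 ∪ A2) B = biedges A1 B ∪ biedges A2 B := by
  ext z
  constructor
  · rintro ⟨a, (ha | ha), b, hb, rfl⟩
    · exact Or.inl ⟨a, ha, b, hb, rfl⟩
    · exact Or.inr ⟨a, ha, b, hb, rfl⟩
  · rintro (⟨a, ha, b, hb, rfl⟩ | ⟨a, ha, b, hb, rfl⟩)
    · exact ⟨a, Or.inl ha, b, hb, rfl⟩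
    · exact ⟨a, Or.inr ha, b, hb, rfl⟩

lemma biedges_comm' (A B : Set V) : biedges A B = biedges B A := by
  ext z
  constructor <;> rintro ⟨a, ha, b, hb, rfl⟩ <;> exact ⟨b, hb, a, ha, Sym2.eq_swap⟩

lemma biedges_mono' {A A' B B' : Set V} (hA : A ⊆ A') (hB : B ⊆ B') :
    biedges A B ⊆ biedges A' B' := by
  rintro z ⟨a, ha, b, hb, rfl⟩; exact ⟨a, hA ha, b, hB hb, rfl⟩

lemma ncard_triple {x y z : V} (hxy : x ≠ y) (hxz : x ≠ z) (hyz : y ≠ z) :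
    ({x, y, z} : Set V).ncard = 3 := by
  rw [Set.ncard_insert_of_notMem (by simp [hxy, hxz]) (Set.toFinite _), Set.ncard_pair hyz]

lemma mem_bcopies {x0 x1 y0 y1 y2 : V} (hx : x0 ≠ x1)
    (hy01 : y0 ≠ y1) (hy02 : y0 ≠ y2) (hy12 : y1 ≠ y2)
    (hadj : ∀ u ∈ ({x0, x1} : Set V), ∀ v ∈ ({y0, y1, y2} : Set V), G.Adj u v) :
    biedges ({x0, x1} : Set V) ({y0, y1, y2} : Set V) ∈ bicliqueCopies G 2 3 :=
  ⟨{x0, x1}, {y0, y1, y2}, Set.ncard_pair hx, ncard_triple hy01 hy02 hy12, hadj, rfl⟩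

/-- L1: columns phase. -/
lemma cols_seq (a0 a1 : V) (h01 : a0 ≠ a1) :
    ∀ k : ℕ, ∀ B : Finset V, B.card = k + 3 →
      (∀ b ∈ B, b ≠ a0 ∧ b ≠ a1) → (∀ b ∈ B, G.Adj a0 b ∧ G.Adj a1 b) →
      ∃ S : List (Set (Sym2 V)), ProperSeq (bicliqueCopies G 2 3) S ∧
        S.length + 2 = B.card ∧ unionList S = biedges {a0, a1} ↑B := by
  intro k
  induction k with
  | zero =>
    intro B hB hdist hadj
    obtain ⟨b0, b1, b2, h01', h02', h12', hBeq⟩ := Finset.card_eq_three.1 hB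
    subst hBeq
    have hadj' : ∀ u ∈ ({a0, a1} : Set V), ∀ v ∈ ({b0, b1, b2} : Set V), G.Adj u v := by
      rintro u hu v hv
      simp only [Set.mem_insert_iff, Set.mem_singleton_iff] at hu hv
      have hvB : v ∈ ({b0, b1, b2} : Finset V) := by
        rcases hv with rfl | rfl | rfl <;> simp
      rcases hu with rfl | rfl
      · exact (hadj v hvB).1
      · exact (hadj v hvB).2
    set Y := biedges ({a0, a1} : Set V) ({b0, b1, b2} : Set V) with hY
    refine ⟨[Y], ?_, by rw [hB]; rfl, ?_⟩
    · have := properSeq_append_singleton (X := bicliqueCopies G 2 3) (S := [])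
        properSeq_nil (mem_bcopies h01 h01' h02' h12' hadj') ?_
      · simpa using this
      · rw [unionList_nil]
        exact fun h => (h (mem_biedges_of (a := a0) (b := b0) (by simp) (by simp))).elim
    · rw [unionList_singleton, hY]
      have hcoe : (↑({b0, b1, b2} : Finset V) : Set V) = ({b0, b1, b2} : Set V) := by simp
      rw [hcoe]
  | succ k ih =>
    intro B hB hdist hadj
    have hBne : B.Nonempty := Finset.card_pos.1 (by omega)
    obtain ⟨bnew, hbnew⟩ := hBne
    set B' := B.erase bnew with hB'
    have hB'card : B'.card = k + 3 := by
      rw [hB', Finset.card_erase_of_mem hbnew, hB]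
      omega
    obtain ⟨S', hS', hlen', hU'⟩ := ih B' hB'card
      (fun b hb => hdist b (Finset.erase_subset _ _ hb))
      (fun b hb => hadj b (Finset.erase_subset _ _ hb))
    have h2card : 1 < B'.card := by omega
    obtain ⟨b0, hb0, b1, hb1, hb01⟩ := Finset.one_lt_card.1 h2card
    have hbnew0 : b0 ≠ bnew := by rintro rfl; exact (Finset.notMem_erase _ _) hb0
    have hbnew1 : b1 ≠ bnew := by rintro rfl; exact (Finset.notMem_erase _ _) hb1
    set Y := biedges ({a0, a1} : Set V) ({b0, b1, bnew} : Set V) with hY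
    have hYX : Y ∈ bicliqueCopies G 2 3 := by
      refine mem_bcopies h01 hb01 hbnew0 hbnew1 ?_
      rintro u hu v hv
      simp only [Set.mem_insert_iff, Set.mem_singleton_iff] at hu hv
      have hvB : v ∈ B := by
        rcases hv with rfl | rfl | rfl
        · exact Finset.erase_subset _ _ hb0
        · exact Finset.erase_subset _ _ hb1
        · exact hbnew
      rcases hu with rfl | rfl
      · exact (hadj v hvB).1
      · exact (hadj v hvB).2
    have hfresh : ¬ Y ⊆ unionList S' := by
      rw [hU']
      intro hsub
      have hmem : s(a0, bnew) ∈ Y := mem_biedges_of (by simp) (by simp)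
      have hnot : s(a0, bnew) ∉ biedges ({a0, a1} : Set V) (↑B' : Set V) := by
        rw [Sym2.eq_swap]
        refine not_mem_biedges_of (x := bnew) (y := a0) ?_ ?_
        · intro h
          simp only [Set.mem_insert_iff, Set.mem_singleton_iff] at h
          rcases h with h | h
          · exact (hdist bnew hbnew).1 h
          · exact (hdist bnew hbnew).2 h
        · simp [hB']
      exact hnot (hsub hmem)
    refine ⟨S' ++ [Y], properSeq_append_singleton hS' hYX hfresh, by simp; omega, ?_⟩
    have hBsets : ((↑B' : Set V) ∪ ({b0, b1, bnew} : Set V)) = (↑B : Set V) := by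
      ext v
      simp only [Set.mem_union, Finset.coe_erase, hB', Set.mem_diff, Finset.mem_coe,
        Set.mem_singleton_iff, Set.mem_insert_iff]
      constructor
      · rintro (⟨hv, _⟩ | hv)
        · exact hv
        · rcases hv with rfl | rfl | rfl
          · exact Finset.erase_subset _ _ hb0
          · exact Finset.erase_subset _ _ hb1
          · exact hbnew
      · intro hv
        by_cases hvb : v = bnew
        · right; right; right; exact hvb
        · left; exact ⟨hv, hvb⟩
    rw [unionList_append, unionList_singleton, hU', hY, ← biedges_union_right, hBsets]

/-- L2: fill a new row. -/
lemma row_seq {X : Set (Set (Sym2 V))} (hX : X = bicliqueCopies G 2 3)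
    (U0 : Set (Sym2 V)) (a0 a1 anew b0 : V) (h01 : a0 ≠ a1) (hn0 : anew ≠ a0) (hn1 : anew ≠ a1) :
    ∀ k : ℕ, ∀ B'' : Finset V, B''.card = k + 2 → b0 ∈ B'' →
      (∀ b ∈ B'', b ≠ a0 ∧ b ≠ a1 ∧ b ≠ anew) →
      (∀ b ∈ B'', G.Adj b a0 ∧ G.Adj b a1 ∧ G.Adj b anew) →
      (∀ b ∈ B'', s(anew, b) ∉ U0) →
      (biedges ({a0, a1} : Set V) (↑B'' : Set V) ⊆ U0) →
      ∀ S0 : List (Set (Sym2 V)), ProperSeq X S0 → unionList S0 = U0 →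
      ∃ S : List (Set (Sym2 V)), ProperSeq X S ∧
        S.length + 1 = S0.length + B''.card ∧
        unionList S = U0 ∪ biedges ({anew} : Set V) (↑B'' : Set V) := by
  intro k
  induction k with
  | zero =>
    intro B'' hcard hb0 hdist hadj hrow hold S0 hS0 hU0
    obtain ⟨x, y, hxy, hBxy⟩ := Finset.card_eq_two.1 hcard
    have hxB : x ∈ B'' := by rw [hBxy]; simp
    have hyB : y ∈ B'' := by rw [hBxy]; simp
    set W := biedges ({x, y} : Set V) ({a0, a1, anew} : Set V) with hW
    have hWX : W ∈ X := by
      rw [hX]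
      refine mem_bcopies hxy h01 hn0.symm hn1.symm ?_
      rintro u hu v hv
      simp only [Set.mem_insert_iff, Set.mem_singleton_iff] at hu hv
      have huB : u ∈ B'' := by rcases hu with rfl | rfl; exacts [hxB, hyB]
      rcases hv with rfl | rfl | rfl
      · exact (hadj u huB).1
      · exact (hadj u huB).2.1
      · exact (hadj u huB).2.2
    have hfresh : ¬ W ⊆ unionList S0 := by
      rw [hU0]
      intro hsub
      have hmem : s(x, anew) ∈ W := mem_biedges_of (by simp) (by simp)
      have hnot : s(anew, x) ∉ U0 := hrow x hxB
      rw [Sym2.eq_swap] at hnot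
      exact hnot (hsub hmem)
    have hsplit : ({a0, a1, anew} : Set V) = ({a0, a1} : Set V) ∪ {anew} := by
      ext v
      simp only [Set.mem_insert_iff, Set.mem_singleton_iff, Set.mem_union]
      tauto
    have hWsplit : W = biedges ({a0, a1} : Set V) ({x, y} : Set V) ∪
        biedges ({anew} : Set V) ({x, y} : Set V) := by
      rw [hW, hsplit, biedges_union_right, biedges_comm' ({x, y} : Set V),
        biedges_comm' ({x, y} : Set V)]
    have hsub1 : biedges ({a0, a1} : Set V) ({x, y} : Set V) ⊆ U0 := by
      refine (biedges_mono' (subset_refl _) ?_).trans hold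
      intro v hv
      simp only [Set.mem_insert_iff, Set.mem_singleton_iff] at hv
      rcases hv with rfl | rfl
      · exact hxB
      · exact hyB
    have h2 : (↑B'' : Set V) = ({x, y} : Set V) := by rw [hBxy]; simp
    refine ⟨S0 ++ [W], properSeq_append_singleton hS0 hWX hfresh, by simp [hcard], ?_⟩
    rw [unionList_append, unionList_singleton, hU0, hWsplit, h2]
    ext z
    simp only [Set.mem_union]
    have hz3 : z ∈ biedges ({a0, a1} : Set V) ({x, y} : Set V) → z ∈ U0 := fun h => hsub1 h
    tauto
  | succ k ih =>
    intro B'' hcard hb0 hdist hadj hrow hold S0 hS0 hU0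
    have h1lt : 1 < B''.card := by omega
    obtain ⟨bj, hbjB, hbj0⟩ := Finset.exists_mem_ne h1lt b0
    set B2 := B''.erase bj with hB2
    have hb0B2 : b0 ∈ B2 := Finset.mem_erase.2 ⟨fun h => hbj0 h.symm, hb0⟩
    have hcard2 : B2.card = k + 2 := by
      rw [hB2, Finset.card_erase_of_mem hbjB]; omega
    have hB2sub : ∀ b ∈ B2, b ∈ B'' := fun b hb => Finset.erase_subset _ _ hb
    obtain ⟨S2, hS2, hlen2, hU2⟩ := ih B2 hcard2 hb0B2
      (fun b hb => hdist b (hB2sub b hb)) (fun b hb => hadj b (hB2sub b hb))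
      (fun b hb => hrow b (hB2sub b hb))
      ((biedges_mono' (subset_refl _) (fun b hb => hB2sub b hb)).trans hold)
      S0 hS0 hU0
    have hb0j : b0 ≠ bj := fun h => hbj0 h.symm
    set W := biedges ({b0, bj} : Set V) ({a0, a1, anew} : Set V) with hW
    have hWX : W ∈ X := by
      rw [hX]
      refine mem_bcopies hb0j h01 hn0.symm hn1.symm ?_
      rintro u hu v hv
      simp only [Set.mem_insert_iff, Set.mem_singleton_iff] at hu hv
      have huB : u ∈ B'' := by rcases hu with rfl | rfl; exacts [hb0, hbjB]
      rcases hv with rfl | rfl | rfl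
      · exact (hadj u huB).1
      · exact (hadj u huB).2.1
      · exact (hadj u huB).2.2
    have hfresh : ¬ W ⊆ unionList S2 := by
      rw [hU2]
      intro hsub
      have hmem : s(bj, anew) ∈ W := mem_biedges_of (by simp) (by simp)
      have hnot : s(bj, anew) ∉ U0 ∪ biedges ({anew} : Set V) (↑B2 : Set V) := by
        rintro (h | h)
        · exact hrow bj hbjB (Sym2.eq_swap ▸ h)
        · refine not_mem_biedges_of ?_ ?_ h
          · simp only [Set.mem_singleton_iff]
            exact (hdist bj hbjB).2.2
          · simp [hB2]
      exact hnot (hsub hmem)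
    have hsplit : ({a0, a1, anew} : Set V) = ({a0, a1} : Set V) ∪ {anew} := by
      ext v
      simp only [Set.mem_insert_iff, Set.mem_singleton_iff, Set.mem_union]
      tauto
    have hWsplit : W = biedges ({a0, a1} : Set V) ({b0, bj} : Set V) ∪
        biedges ({anew} : Set V) ({b0, bj} : Set V) := by
      rw [hW, hsplit, biedges_union_right, biedges_comm' ({b0, bj} : Set V),
        biedges_comm' ({b0, bj} : Set V)]
    have hsub1 : biedges ({a0, a1} : Set V) ({b0, bj} : Set V) ⊆ U0 := by
      refine (biedges_mono' (subset_refl _) ?_).trans hold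
      intro v hv
      simp only [Set.mem_insert_iff, Set.mem_singleton_iff] at hv
      rcases hv with rfl | rfl
      · exact hb0
      · exact hbjB
    have hBeq : ((↑B2 : Set V) ∪ ({b0, bj} : Set V)) = (↑B'' : Set V) := by
      ext v
      simp only [Set.mem_union, Finset.coe_erase, Set.mem_diff, Finset.mem_coe,
        Set.mem_singleton_iff, Set.mem_insert_iff, hB2]
      constructor
      · rintro (⟨hv, _⟩ | rfl | rfl)
        · exact hv
        · exact hb0
        · exact hbjB
      · intro hv
        by_cases hvb : v = bj
        · right; right; exact hvb
        · left; exact ⟨hv, hvb⟩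
    have hmerge : biedges ({anew} : Set V) (↑B'' : Set V) =
        biedges ({anew} : Set V) (↑B2 : Set V) ∪ biedges ({anew} : Set V) ({b0, bj} : Set V) := by
      rw [← hBeq, biedges_union_right]
    refine ⟨S2 ++ [W], properSeq_append_singleton hS2 hWX hfresh, by simp; omega, ?_⟩
    rw [unionList_append, unionList_singleton, hU2, hWsplit, hmerge]
    ext z
    simp only [Set.mem_union]
    have hz3 : z ∈ biedges ({a0, a1} : Set V) ({b0, bj} : Set V) → z ∈ U0 := fun h => hsub1 h
    tauto

/-- L3: all rows. -/
lemma rows_seq {X : Set (Set (Sym2 V))} (hX : X = bicliqueCopies G 2 3) :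
    ∀ k : ℕ, ∀ A : Finset V, A.card = k + 2 → ∀ B : Finset V, 3 ≤ B.card →
      (∀ a ∈ A, ∀ b ∈ B, a ≠ b) → (∀ a ∈ A, ∀ b ∈ B, G.Adj a b) →
      ∃ S : List (Set (Sym2 V)), ProperSeq X S ∧
        S.length + A.card + B.card = A.card * B.card ∧
        unionList S = biedges (↑A : Set V) (↑B : Set V) := by
  intro k
  induction k with
  | zero =>
    intro A hA B hB hd hadj
    obtain ⟨x, y, hxy, hAeq⟩ := Finset.card_eq_two.1 hA
    subst hAeq
    obtain ⟨S, hS, hlen, hU⟩ := cols_seq x y hxy (B.card - 3) B (by omega)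
      (fun b hb => ⟨fun h => hd x (by simp) b hb h.symm, fun h => hd y (by simp) b hb h.symm⟩)
      (fun b hb => ⟨hadj x (by simp) b hb, hadj y (by simp) b hb⟩)
    rw [hX]
    refine ⟨S, hS, ?_, ?_⟩
    · have hcA : ({x, y} : Finset V).card = 2 := hA
      rw [hcA]
      have : 2 * B.card = B.card + B.card := by ring
      omega
    · rw [hU]
      have hcoe : (↑({x, y} : Finset V) : Set V) = ({x, y} : Set V) := by simp
      rw [hcoe]
  | succ k ih =>
    intro A hA B hB hd hadj
    have hAne : A.Nonempty := Finset.card_pos.1 (by omega)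
    obtain ⟨anew, hanew⟩ := hAne
    set A' := A.erase anew with hA'
    have hA'card : A'.card = k + 2 := by rw [hA', Finset.card_erase_of_mem hanew, hA]; omega
    have hA'sub : ∀ a ∈ A', a ∈ A := fun a ha => Finset.erase_subset _ _ ha
    obtain ⟨S0, hS0, hlen0, hU0⟩ := ih A' hA'card B hB
      (fun a ha => hd a (hA'sub a ha)) (fun a ha => hadj a (hA'sub a ha))
    obtain ⟨a0, ha0, a1, ha1, h01⟩ := Finset.one_lt_card.1 (show 1 < A'.card by omega)
    have hanewA' : anew ∉ A' := Finset.notMem_erase _ _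
    have hn0 : anew ≠ a0 := by rintro rfl; exact hanewA' ha0
    have hn1 : anew ≠ a1 := by rintro rfl; exact hanewA' ha1
    obtain ⟨b0, hb0⟩ := Finset.card_pos.1 (show 0 < B.card by omega)
    obtain ⟨S, hS, hlen, hU⟩ := row_seq hX (biedges (↑A' : Set V) (↑B : Set V))
      a0 a1 anew b0 h01 hn0 hn1 (B.card - 2) B (by omega) hb0
      (fun b hb => ⟨fun h => hd a0 (hA'sub a0 ha0) b hb h.symm,
        fun h => hd a1 (hA'sub a1 ha1) b hb h.symm,
        fun h => hd anew hanew b hb h.symm⟩)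
      (fun b hb => ⟨(hadj a0 (hA'sub a0 ha0) b hb).symm,
        (hadj a1 (hA'sub a1 ha1) b hb).symm, (hadj anew hanew b hb).symm⟩)
      (fun b hb => not_mem_biedges_of (by simpa [hA'] using fun h => absurd h (by simp))
        (fun h => hd anew hanew anew (by exact_mod_cast h) rfl))
      (biedges_mono' (by
        intro v hv
        simp only [Set.mem_insert_iff, Set.mem_singleton_iff] at hv
        rcases hv with rfl | rfl
        · exact ha0
        · exact ha1) (subset_refl _))
      S0 hS0 hU0
    refine ⟨S, hS, ?_, ?_⟩
    · have hprod : A.card * B.card = A'.card * B.card + B.card := by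
        rw [hA, hA'card]; ring
      omega
    · have hAsets : ((↑A' : Set V) ∪ ({anew} : Set V)) = (↑A : Set V) := by
        ext v
        simp only [Set.mem_union, Finset.coe_erase, Set.mem_diff, Finset.mem_coe,
          Set.mem_singleton_iff, hA']
        constructor
        · rintro (⟨hv, _⟩ | rfl)
          · exact hv
          · exact hanew
        · intro hv
          by_cases hva : v = anew
          · right; exact hva
          · left; exact ⟨hv, hva⟩
      rw [hU, ← biedges_union_left, hAsets]
end Constr

section Wrapper

variable {m n : ℕ}

local notation "V" => (Fin m ⊕ Fin n)
local notation "G" => completeBipartiteGraph (Fin m) (Fin n)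

lemma edge_decomp {e : Sym2 V} (he : e ∈ (G).edgeSet) :
    ∃ x y, e = s(Sum.inl x, Sum.inr y) := by
  induction e using Sym2.ind with
  | _ u v =>
    rw [SimpleGraph.mem_edgeSet] at he
    rcases he with ⟨hu, hv⟩ | ⟨hu, hv⟩
    · obtain ⟨x, rfl⟩ := Sum.isLeft_iff.1 hu
      obtain ⟨y, rfl⟩ := Sum.isRight_iff.1 hv
      exact ⟨x, y, rfl⟩
    · obtain ⟨y, rfl⟩ := Sum.isRight_iff.1 hu
      obtain ⟨x, rfl⟩ := Sum.isLeft_iff.1 hv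
      exact ⟨x, y, Sym2.eq_swap⟩

lemma exists_seq_val (F : Set (Sym2 V)) (hFE : F ⊆ (G).edgeSet) :
    ∃ S : List (Set (Sym2 V)), ProperSeq (bicliqueCopies (G) 2 3) S ∧
      valSeq F S ≤ (F.ncard : ℤ) - defc F := by
  classical
  rcases Nat.eq_zero_or_pos (defc F) with hD | hD
  · refine ⟨[], properSeq_nil, ?_⟩
    rw [valSeq, unionList_nil, hD]
    simp
  obtain ⟨J, hJF, hJd⟩ := defc_exists F
  set As : Set V := {v ∈ verts J | v.isLeft} with hAs
  set Bs : Set V := {v ∈ verts J | v.isRight} with hBs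
  have hJbe : J ⊆ biedges As Bs := by
    intro e he
    obtain ⟨x, y, rfl⟩ := edge_decomp (hFE (hJF he))
    refine ⟨Sum.inl x, ⟨⟨_, he, by simp⟩, rfl⟩, Sum.inr y, ⟨⟨_, he, by simp⟩, rfl⟩, rfl⟩
  have hvJ : verts J = As ∪ Bs := by
    ext v
    constructor
    · intro hv
      rcases v with x | y
      · exact Or.inl ⟨hv, rfl⟩
      · exact Or.inr ⟨hv, rfl⟩
    · rintro (⟨hv, _⟩ | ⟨hv, _⟩) <;> exact hv
  have hdisj : Disjoint As Bs := by
    rw [Set.disjoint_left]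
    rintro v ⟨_, hl⟩ ⟨_, hr⟩
    rcases v with x | y
    · simp at hr
    · simp at hl
  set Af : Finset V := As.toFinite.toFinset with hAf
  set Bf : Finset V := Bs.toFinite.toFinset with hBf
  have hAfc : (↑Af : Set V) = As := Set.Finite.coe_toFinset _
  have hBfc : (↑Bf : Set V) = Bs := Set.Finite.coe_toFinset _
  set p := Af.card with hp
  set q := Bf.card with hq
  have hpn : As.ncard = p := by rw [Set.ncard_eq_toFinset_card _ (Set.toFinite _)]
  have hqn : Bs.ncard = q := by rw [Set.ncard_eq_toFinset_card _ (Set.toFinite _)]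
  have hvcard : (verts J).ncard = p + q := by
    rw [hvJ, Set.ncard_union_eq hdisj (Set.toFinite _) (Set.toFinite _), hpn, hqn]
  have hJle : J.ncard ≤ p * q := by
    calc J.ncard ≤ (biedges As Bs).ncard := Set.ncard_le_ncard hJbe (Set.toFinite _)
      _ = p * q := by rw [ncard_biedges hdisj (Set.toFinite _) (Set.toFinite _), hpn, hqn]
  have hkey : p + q + defc F ≤ p * q := by
    rw [hvcard] at hJd
    omega
  have hp2 : 2 ≤ p := by
    by_contra h
    push_neg at h
    have : p * q ≤ 1 * q := Nat.mul_le_mul_right q (by omega)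
    omega
  have hq2 : 2 ≤ q := by
    by_contra h
    push_neg at h
    have : p * q ≤ p * 1 := Nat.mul_le_mul_left p (by omega)
    omega
  have hne : ∀ a ∈ Af, ∀ b ∈ Bf, a ≠ b := by
    intro a ha b hb
    rw [← Finset.mem_coe, hAfc] at ha
    rw [← Finset.mem_coe, hBfc] at hb
    rintro rfl
    rcases a with x | y
    · simpa using hb.2
    · simpa using ha.2
  have hadj : ∀ a ∈ Af, ∀ b ∈ Bf, (G).Adj a b := by
    intro a ha b hb
    rw [← Finset.mem_coe, hAfc] at ha
    rw [← Finset.mem_coe, hBfc] at hb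
    exact Or.inl ⟨ha.2, hb.2⟩
  have hmain : ∃ S : List (Set (Sym2 V)), ProperSeq (bicliqueCopies (G) 2 3) S ∧
      S.length + p + q = p * q ∧ unionList S = biedges As Bs := by
    rcases le_or_gt 3 q with h3 | h3
    · obtain ⟨S, hS, hlen, hU⟩ := rows_seq rfl (p - 2) Af (by omega) Bf h3 hne hadj
      exact ⟨S, hS, by rw [← hp, ← hq] at hlen; exact hlen, by rw [hU, hAfc, hBfc]⟩
    · have h3p : 3 ≤ p := by
        by_contra hcon
        push_neg at hcon
        have hp2' : p = 2 := by omega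
        have hq2' : q = 2 := by omega
        rw [hp2', hq2'] at hkey
        omega
      obtain ⟨S, hS, hlen, hU⟩ := rows_seq rfl (q - 2) Bf (by omega) Af (by omega)
        (fun b hb a ha => (hne a ha b hb).symm) (fun b hb a ha => (hadj a ha b hb).symm)
      refine ⟨S, hS, ?_, by rw [hU, hAfc, hBfc, biedges_comm']⟩
      rw [← hp, ← hq] at hlen
      have : q * p = p * q := Nat.mul_comm q p
      omega
  obtain ⟨S, hS, hlen, hU⟩ := hmain
  refine ⟨S, hS, ?_⟩
  set U := biedges As Bs with hUdef
  have hJU : J ⊆ U := hJbe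
  have hUF : (U \ F).ncard ≤ (U \ J).ncard :=
    Set.ncard_le_ncard (fun x hx => ⟨hx.1, fun h => hx.2 (hJF h)⟩) (Set.toFinite _)
  have hUJ : (U \ J).ncard + J.ncard = U.ncard := by
    rw [Set.ncard_diff_add_ncard_of_subset hJU (Set.toFinite _)]
  have hUcard : U.ncard = p * q := by
    rw [hUdef, ncard_biedges hdisj (Set.toFinite _) (Set.toFinite _), hpn, hqn]
  have hFU : (F ∪ unionList S).ncard = F.ncard + ((unionList S) \ F).ncard := by
    rw [← Set.ncard_union_eq disjoint_sdiff_right (Set.toFinite _) (Set.toFinite _),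
      union_diff_self]
  rw [hU] at hFU
  rw [valSeq, hU]
  have hJd' : (p + q) + defc F ≤ J.ncard := by rw [hvcard] at hJd; exact hJd
  push_cast
  omega
end Wrapper

theorem bicircular_unique_maximal_K23 (m n : ℕ) (M : Matroid (Sym2 (Fin m ⊕ Fin n)))
    (hME : M.E = (completeBipartiteGraph (Fin m) (Fin n)).edgeSet)
    (hMI : ∀ F : Set (Sym2 (Fin m ⊕ Fin n)), M.Indep F ↔
      F ⊆ (completeBipartiteGraph (Fin m) (Fin n)).edgeSet ∧
      ∀ I ⊆ F, I.Nonempty → I.ncard ≤ (verts I).ncard) :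
    IsXMatroid (completeBipartiteGraph (Fin m) (Fin n)).edgeSet
      (bicliqueCopies (completeBipartiteGraph (Fin m) (Fin n)) 2 3) M ∧
    (∀ N : Matroid (Sym2 (Fin m ⊕ Fin n)),
      IsXMatroid (completeBipartiteGraph (Fin m) (Fin n)).edgeSet
        (bicliqueCopies (completeBipartiteGraph (Fin m) (Fin n)) 2 3) N → WeakLE N M) ∧
    ∀ F ⊆ (completeBipartiteGraph (Fin m) (Fin n)).edgeSet,
      (mrk M F : ℤ) = valX (bicliqueCopies (completeBipartiteGraph (Fin m) (Fin n)) 2 3) F := by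
  classical
  set G := completeBipartiteGraph (Fin m) (Fin n) with hG
  set X := bicliqueCopies G 2 3 with hXdef
  have hX : ∀ C ∈ X, M.IsCircuit' C := fun C hC => biclique_isCircuit hME hMI hC
  refine ⟨⟨hME, hX⟩, ?_, ?_⟩
  · -- M is the unique maximal X-matroid
    rintro N ⟨hNE, hNX⟩ I hI
    rw [hMI]
    have hIE : I ⊆ G.edgeSet := hNE ▸ hI.subset_ground
    refine ⟨hIE, ?_⟩
    intro J hJ hJne
    by_contra hcon
    push_neg at hcon
    have hd1 : 1 ≤ defc J := le_defc (subset_refl J) (by omega)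
    obtain ⟨S, hS, hval⟩ := exists_seq_val J (hJ.trans hIE)
    have h1 : (mrk N J : ℤ) ≤ valSeq J S := mrk_le_valSeq hNX J S hS
    have h2 : J.ncard ≤ mrk N J := ncard_le_mrk (hI.subset hJ) (subset_refl _)
    omega
  · -- the rank function is valX
    intro F hFE
    have hrk1 : mrk M F + defc F ≤ F.ncard := mrk_add_defc_le hMI F
    have hrk2 : F.ncard ≤ mrk M F + defc F := le_mrk_add_defc hMI hFE
    apply le_antisymm
    · refine le_csInf ⟨valSeq F [], [], properSeq_nil, rfl⟩ ?_
      rintro v ⟨S, hS, rfl⟩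
      exact mrk_le_valSeq hX F S hS
    · obtain ⟨S, hS, hval⟩ := exists_seq_val F hFE
      have hbdd : BddBelow {v : ℤ | ∃ S : List (Set (Sym2 (Fin m ⊕ Fin n))),
          ProperSeq X S ∧ v = valSeq F S} := by
        refine ⟨(mrk M F : ℤ), ?_⟩
        rintro v ⟨S', hS', rfl⟩
        exact mrk_le_valSeq hX F S' hS'
      have hle : valX X F ≤ valSeq F S := csInf_le hbdd ⟨S, hS, rfl⟩
      omega
end

section
/- For all k ≥ 5 and n ≥ C(k−1,2) + 2, the poset (under the weak order) of matroids on E(K_n) in which the edge set of every k-cycle is a circuit has at least two distinct maximal elements. -/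
open Set

variable {α : Type*}

/-- The edge sets of cycles of length `k` in the complete graph `K_n`. -/
def cycleCopies (n k : ℕ) : Set (Set (Sym2 (Fin n))) :=
  {F | ∃ f : ZMod k ↪ Fin n, F = Set.range fun i : ZMod k => s(f i, f (i + 1))}

namespace CkAux

open Set Function

section general

variable {n k : ℕ}

/-- The edge map of a cycle copy. -/
abbrev em (f : ZMod k ↪ Fin n) : ZMod k → Sym2 (Fin n) := fun i => s(f i, f (i + 1))

lemma natCast_val_lt (hk : 5 ≤ k) {a : ℕ} (ha : a < k) : ((a : ZMod k)).val = a := by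
  haveI : NeZero k := ⟨by omega⟩
  exact ZMod.val_cast_of_lt ha

lemma natCast_inj (hk : 5 ≤ k) {a b : ℕ} (ha : a < k) (hb : b < k)
    (h : (a : ZMod k) = (b : ZMod k)) : a = b := by
  have := congrArg ZMod.val h
  rwa [natCast_val_lt hk ha, natCast_val_lt hk hb] at this

lemma natCast_ne_zero (hk : 5 ≤ k) {a : ℕ} (ha : 0 < a) (ha' : a < k) :
    (a : ZMod k) ≠ 0 := by
  intro h
  have : a = 0 := natCast_inj hk ha' (by omega) (by exact_mod_cast h)
  omega

lemma one_ne_zero' (hk : 5 ≤ k) : (1 : ZMod k) ≠ 0 := by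
  have := natCast_ne_zero hk (a := 1) (by omega) (by omega)
  simpa using this

lemma two_ne_zero' (hk : 5 ≤ k) : (2 : ZMod k) ≠ 0 := by
  have := natCast_ne_zero hk (a := 2) (by omega) (by omega)
  simpa using this

lemma zmod_val_inj (hk : 5 ≤ k) {i j : ZMod k} (h : i.val = j.val) : i = j := by
  haveI : NeZero k := ⟨by omega⟩
  rw [← ZMod.natCast_rightInverse i, ← ZMod.natCast_rightInverse j, h]

lemma em_injective (hk : 5 ≤ k) (f : ZMod k ↪ Fin n) : Function.Injective (em f) := by
  intro i j hij
  rw [em, Sym2.eq_iff] at hij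
  rcases hij with ⟨h1, _⟩ | ⟨h1, h2⟩
  · exact f.injective h1
  · have e1 : i = j + 1 := f.injective h1
    have e2 : i + 1 = j := f.injective h2
    have h3 : j + 2 = j := by
      calc j + 2 = (j + 1) + 1 := by ring
        _ = i + 1 := by rw [e1]
        _ = j := e2
    exact absurd (add_eq_left.mp h3) (two_ne_zero' hk)

lemma cycle_ncard (hk : 5 ≤ k) {C : Set (Sym2 (Fin n))} (hC : C ∈ cycleCopies n k) :
    C.ncard = k := by
  haveI : NeZero k := ⟨by omega⟩
  obtain ⟨f, rfl⟩ := hC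
  have h1 : (Set.range fun i : ZMod k => s(f i, f (i + 1))) = (em f) '' Set.univ := by
    rw [Set.image_univ]
  rw [h1, Set.ncard_image_of_injective _ (em_injective hk f), Set.ncard_univ,
    Nat.card_eq_fintype_card, ZMod.card]

lemma cycle_subset_E (hk : 5 ≤ k) {C : Set (Sym2 (Fin n))} (hC : C ∈ cycleCopies n k) :
    C ⊆ (⊤ : SimpleGraph (Fin n)).edgeSet := by
  obtain ⟨f, rfl⟩ := hC
  rintro e ⟨i, rfl⟩
  rw [SimpleGraph.mem_edgeSet, SimpleGraph.top_adj]
  intro h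
  have h2 : i = i + 1 := f.injective h
  exact absurd (left_eq_add.mp h2) (one_ne_zero' hk)

lemma cycle_support (hk : 5 ≤ k) {C : Set (Sym2 (Fin n))} (hC : C ∈ cycleCopies n k)
    (h : ∀ e ∈ C, ∀ v : Fin n, v ∈ e → v.val < k - 1) : False := by
  haveI : NeZero k := ⟨by omega⟩
  obtain ⟨f, rfl⟩ := hC
  have hv : ∀ i : ZMod k, (f i).val < k - 1 := by
    intro i
    exact h _ ⟨i, rfl⟩ (f i) (Sym2.mem_mk_left _ _)
  have hinj : Function.Injective (fun i : ZMod k => (⟨(f i).val, hv i⟩ : Fin (k - 1))) := by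
    intro i j hij
    have h2 := congrArg Fin.val hij
    exact f.injective (Fin.ext h2)
  have hcard := Fintype.card_le_of_injective _ hinj
  rw [ZMod.card, Fintype.card_fin] at hcard
  omega

lemma mem_closure_of_circuit {N : Matroid (Sym2 (Fin n))} {C : Set (Sym2 (Fin n))}
    (hC : N.IsCircuit' C) {e : Sym2 (Fin n)} (he : e ∈ C) : e ∈ N.closure (C \ {e}) := by
  have hI := hC.2.2 e he
  rw [hI.mem_closure_iff]
  left
  rw [Set.insert_diff_singleton, Set.insert_eq_of_mem he]
  exact ⟨hC.2.1, hC.1⟩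

lemma indep_ncard_le_of_subset_closure {β : Type*} {N : Matroid β} {W A : Set β}
    (hWE : W ⊆ N.E) (hA : N.Indep A) (hAW : A ⊆ N.closure W)
    (hWfin : W.Finite) (hAfin : A.Finite) : A.ncard ≤ W.ncard := by
  obtain ⟨B, hB⟩ := N.exists_isBasis W hWE
  have hBfin : B.Finite := hWfin.subset hB.subset
  by_contra hlt
  push_neg at hlt
  have hBA : B.encard < A.encard := by
    rw [← hBfin.cast_ncard_eq, ← hAfin.cast_ncard_eq]
    exact_mod_cast lt_of_le_of_lt (Set.ncard_le_ncard hB.subset hWfin) hlt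
  obtain ⟨x, hx, hxi⟩ := hB.indep.augment hA hBA
  have hxcl : x ∈ N.closure B := by
    rw [hB.closure_eq_closure]; exact hAW hx.1
  rw [hB.indep.mem_closure_iff] at hxcl
  rcases hxcl with hdep | hmem
  · exact hdep.1 hxi
  · exact hx.2 hmem

lemma cert_dep (hk : 5 ≤ k) {N : Matroid (Sym2 (Fin n))}
    (hN : IsXMatroid (⊤ : SimpleGraph (Fin n)).edgeSet (cycleCopies n k) N)
    {Y₁ Y₂ A : Set (Sym2 (Fin n))} {c₁ c₂ : Sym2 (Fin n)}
    (hY₁ : Y₁ ∈ cycleCopies n k) (hY₂ : Y₂ ∈ cycleCopies n k)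
    (hc₁ : c₁ ∈ Y₂) (hc₂ : c₂ ∈ Y₂) (hY₂sub : Y₂ ⊆ Y₁ ∪ {c₁, c₂})
    (hA : A ⊆ Y₁ ∪ {c₁, c₂}) (hcard : k + 1 ≤ A.ncard) : ¬ N.Indep A := by
  intro hAi
  have hC₁ := hN.2 Y₁ hY₁
  have hC₂ := hN.2 Y₂ hY₂
  have hY₁E : Y₁ ⊆ N.E := hC₁.1
  have hY₂E : Y₂ ⊆ N.E := hC₂.1
  have hY₁ne : Y₁.Nonempty := by
    rw [Set.nonempty_iff_ne_empty]
    rintro rfl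
    exact hC₁.2.1 N.empty_indep
  obtain ⟨e₀, he₀⟩ := hY₁ne
  set W : Set (Sym2 (Fin n)) := (Y₁ \ {e₀}) ∪ {c₁} with hW
  have hWE : W ⊆ N.E := Set.union_subset (Set.diff_subset.trans hY₁E)
    (Set.singleton_subset_iff.mpr (hY₂E hc₁))
  have he₀cl : e₀ ∈ N.closure W :=
    N.closure_subset_closure Set.subset_union_left (mem_closure_of_circuit hC₁ he₀)
  have hY₁cl : Y₁ ⊆ N.closure W := by
    intro y hy
    by_cases hye : y = e₀
    · exact hye ▸ he₀cl
    · exact N.subset_closure W hWE (Or.inl ⟨hy, hye⟩)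
  have hc₁cl : c₁ ∈ N.closure W := N.subset_closure W hWE (Or.inr rfl)
  have hc₂cl : c₂ ∈ N.closure W := by
    have hsub2 : Y₂ \ {c₂} ⊆ N.closure W := by
      rintro y ⟨hy, hy2⟩
      rcases hY₂sub hy with h | h
      · exact hY₁cl h
      · rw [Set.mem_insert_iff, Set.mem_singleton_iff] at h
        rcases h with h | h
        · exact h ▸ hc₁cl
        · exact absurd h hy2
    exact N.closure_subset_closure_of_subset_closure hsub2 (mem_closure_of_circuit hC₂ hc₂)
  have hAcl : A ⊆ N.closure W := by
    intro a ha
    rcases hA ha with h | h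
    · exact hY₁cl h
    · rw [Set.mem_insert_iff, Set.mem_singleton_iff] at h
      rcases h with h | h
      · exact h ▸ hc₁cl
      · exact h ▸ hc₂cl
  have hle := indep_ncard_le_of_subset_closure hWE hAi hAcl (Set.toFinite _) (Set.toFinite _)
  have hY₁k : Y₁.ncard = k := cycle_ncard hk hY₁
  have hWcard : W.ncard ≤ k := by
    have h1 : (Y₁ \ {e₀}).ncard = k - 1 := by
      rw [Set.ncard_diff_singleton_of_mem he₀, hY₁k]
    calc W.ncard ≤ (Y₁ \ {e₀}).ncard + ({c₁} : Set (Sym2 (Fin n))).ncard :=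
          Set.ncard_union_le _ _
      _ ≤ (k - 1) + 1 := by rw [h1, Set.ncard_singleton]
      _ ≤ k := by omega
  omega

end general

end CkAux

namespace CkAux

open Set Function

section maximal

variable {α : Type*}

instance matroid_finite [Finite α] : Finite (Matroid α) := by
  have hinj : Function.Injective (fun M : Matroid α => (M.E, M.Indep)) := by
    intro M₁ M₂ h
    simp only [Prod.mk.injEq] at h
    exact Matroid.ext_indep h.1 (fun I _ => by rw [h.2])
  exact Finite.of_injective _ hinj

lemma exists_maximal_xmatroid [Finite α] (E : Set α) (X : Set (Set α)) {M₀ : Matroid α}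
    (hM₀ : IsXMatroid E X M₀) :
    ∃ M, IsXMatroid E X M ∧ WeakLE M₀ M ∧
      ∀ N, IsXMatroid E X N → WeakLE M N → WeakLE N M := by
  classical
  set S : Set (Matroid α) := {N | IsXMatroid E X N ∧ WeakLE M₀ N} with hS
  obtain ⟨M, hMS, hmax⟩ := Set.Finite.exists_maximalFor
      (fun N => {I : Set α | N.Indep I}.ncard) S (Set.toFinite S) ⟨M₀, hM₀, fun I h => h⟩
  refine ⟨M, hMS.1, hMS.2, ?_⟩
  intro N hN hMN
  have hNS : N ∈ S := ⟨hN, fun I hI => hMN I (hMS.2 I hI)⟩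
  have hsub : {I : Set α | M.Indep I} ⊆ {I : Set α | N.Indep I} := fun I hI => hMN I hI
  have hle : {I : Set α | M.Indep I}.ncard ≤ {I : Set α | N.Indep I}.ncard :=
    Set.ncard_le_ncard hsub (Set.toFinite _)
  have heq := hmax hNS hle
  have hseteq : {I : Set α | M.Indep I} = {I : Set α | N.Indep I} :=
    Set.eq_of_subset_of_ncard_le hsub heq (Set.toFinite _)
  intro I hI
  have h2 : I ∈ {I : Set α | N.Indep I} := hI
  rw [← hseteq] at h2
  exact h2

end maximal

end CkAux

namespace CkAux

open Set Function

section sparse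

variable {n k : ℕ}

lemma mem_em_iff (hk : 5 ≤ k) (f : ZMod k ↪ Fin n) (t i : ZMod k) :
    f t ∈ em f i ↔ i = t ∨ i = t - 1 := by
  rw [em, Sym2.mem_iff]
  constructor
  · rintro (h | h)
    · exact Or.inl (f.injective h).symm
    · right
      have h2 := (f.injective h).symm
      exact eq_sub_iff_add_eq.mpr h2
  · rintro (rfl | h)
    · exact Or.inl rfl
    · right
      rw [h, sub_add_cancel]

lemma filter_deg_eq (hk : 5 ≤ k) (f : ZMod k ↪ Fin n) (i₀ : ZMod k) (v : Fin n) :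
    {e | e ∈ (Set.range (em f) \ {em f i₀}) ∧ v ∈ e}
      = em f '' ({i | v ∈ em f i} \ {i₀}) := by
  ext e
  constructor
  · rintro ⟨⟨⟨i, rfl⟩, hne⟩, hv⟩
    refine ⟨i, ⟨hv, ?_⟩, rfl⟩
    intro h
    rw [Set.mem_singleton_iff] at h
    exact hne (by rw [h]; exact Set.mem_singleton _)
  · rintro ⟨i, ⟨hv, hne⟩, rfl⟩
    refine ⟨⟨⟨i, rfl⟩, ?_⟩, hv⟩
    intro h
    rw [Set.mem_singleton_iff] at h
    exact hne (Set.mem_singleton_iff.mpr (em_injective hk f h))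

lemma degOne_iff (hk : 5 ≤ k) (f : ZMod k ↪ Fin n) (i₀ : ZMod k) (v : Fin n) :
    ({e | e ∈ (Set.range (em f) \ {em f i₀}) ∧ v ∈ e}).ncard = 1
      ↔ (v = f i₀ ∨ v = f (i₀ + 1)) := by
  rw [filter_deg_eq hk f i₀ v, Set.ncard_image_of_injective _ (em_injective hk f)]
  by_cases hv : v ∈ Set.range f
  · obtain ⟨t, rfl⟩ := hv
    have hSv : {i : ZMod k | f t ∈ em f i} = {t, t - 1} := by
      ext i
      rw [Set.mem_setOf_eq, mem_em_iff hk, Set.mem_insert_iff, Set.mem_singleton_iff]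
    have hne : t ≠ t - 1 := by
      intro h
      have h2 : t - 1 + 1 = t := sub_add_cancel _ _
      rw [← h] at h2
      exact one_ne_zero' hk (add_eq_left.mp h2)
    rw [hSv]
    constructor
    · intro h1
      by_cases h : i₀ = t
      · left; rw [h]
      by_cases h' : i₀ = t - 1
      · right
        rw [h', sub_add_cancel]
      · exfalso
        rw [Set.diff_singleton_eq_self (by
          intro hmem
          rw [Set.mem_insert_iff, Set.mem_singleton_iff] at hmem
          rcases hmem with h2 | h2
          · exact h h2
          · exact h' h2)] at h1
        rw [Set.ncard_pair hne] at h1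
        omega
    · rintro (h | h)
      · have ht : t = i₀ := f.injective h
        rw [← ht, Set.pair_diff_left hne, Set.ncard_singleton]
      · have ht : t = i₀ + 1 := f.injective h
        have hi₀ : i₀ = t - 1 := by rw [ht]; ring
        rw [hi₀, Set.pair_diff_right hne, Set.ncard_singleton]
  · have hSv : {i : ZMod k | v ∈ em f i} = ∅ := by
      ext i
      simp only [Set.mem_setOf_eq, Set.mem_empty_iff_false, iff_false]
      intro h
      rw [em, Sym2.mem_iff] at h
      rcases h with h | h
      · exact hv ⟨i, h.symm⟩
      · exact hv ⟨i + 1, h.symm⟩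
    rw [hSv]
    simp only [Set.empty_diff, Set.ncard_empty]
    constructor
    · omega
    · rintro (h | h)
      · exact absurd ⟨i₀, h.symm⟩ hv
      · exact absurd ⟨i₀ + 1, h.symm⟩ hv

lemma unique_completion (hk : 5 ≤ k) {I : Set (Sym2 (Fin n))} {a b : Sym2 (Fin n)}
    (ha : a ∉ I) (hb : b ∉ I)
    (hCa : insert a I ∈ cycleCopies n k) (hCb : insert b I ∈ cycleCopies n k) : a = b := by
  obtain ⟨f, hf⟩ := hCa
  obtain ⟨g, hg⟩ := hCb
  have haC : a ∈ Set.range (em f) := by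
    rw [show Set.range (em f) = insert a I from hf.symm]
    exact Set.mem_insert _ _
  have hbC : b ∈ Set.range (em g) := by
    rw [show Set.range (em g) = insert b I from hg.symm]
    exact Set.mem_insert _ _
  obtain ⟨i₀, hi₀⟩ := haC
  obtain ⟨j₀, hj₀⟩ := hbC
  have hIa : I = Set.range (em f) \ {em f i₀} := by
    rw [hi₀, ← hf, Set.insert_diff_self_of_notMem ha]
  have hIb : I = Set.range (em g) \ {em g j₀} := by
    rw [hj₀, ← hg, Set.insert_diff_self_of_notMem hb]
  have hdeq : ∀ v : Fin n, (v = f i₀ ∨ v = f (i₀ + 1)) ↔ (v = g j₀ ∨ v = g (j₀ + 1)) := by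
    intro v
    rw [← degOne_iff hk f i₀ v, ← degOne_iff hk g j₀ v, ← hIa, ← hIb]
  have hpair : ({f i₀, f (i₀ + 1)} : Set (Fin n)) = {g j₀, g (j₀ + 1)} := by
    ext v
    rw [Set.mem_insert_iff, Set.mem_singleton_iff, Set.mem_insert_iff, Set.mem_singleton_iff]
    exact hdeq v
  rw [Set.pair_eq_pair_iff] at hpair
  rw [← hi₀, ← hj₀]
  rcases hpair with ⟨h1, h2⟩ | ⟨h1, h2⟩
  · rw [em, em, h1, h2]
  · rw [em, em, h1, h2, Sym2.eq_swap]

/-- Independence for the rank-`k` sparse paving matroid whose circuit-hyperplanes are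
the `k`-cycles. -/
def spIndep (n k : ℕ) (I : Set (Sym2 (Fin n))) : Prop :=
  I ⊆ (⊤ : SimpleGraph (Fin n)).edgeSet ∧ I.ncard ≤ k ∧
    (I.ncard < k ∨ I ∉ cycleCopies n k)

lemma spIndep_empty (hk : 5 ≤ k) : spIndep n k ∅ :=
  ⟨Set.empty_subset _, by simp, Or.inl (by simp; omega)⟩

lemma spIndep_subset {I J : Set (Sym2 (Fin n))} (hJ : spIndep n k J) (hIJ : I ⊆ J) :
    spIndep n k I := by
  have hfin : J.Finite := Set.toFinite _
  have hcard : I.ncard ≤ J.ncard := Set.ncard_le_ncard hIJ hfin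
  refine ⟨hIJ.trans hJ.1, hcard.trans hJ.2.1, ?_⟩
  by_cases h : I.ncard < k
  · exact Or.inl h
  · have hJk := hJ.2.1
    have hIJcard : J.ncard ≤ I.ncard := by omega
    have hIJeq : I = J := Set.eq_of_subset_of_ncard_le hIJ hIJcard hfin
    rw [hIJeq]
    rcases hJ.2.2 with h2 | h2
    · exact Or.inl h2
    · exact Or.inr h2

lemma spIndep_aug (hk : 5 ≤ k) {I J : Set (Sym2 (Fin n))} (hI : spIndep n k I)
    (hJ : spIndep n k J) (hlt : I.ncard < J.ncard) :
    ∃ e ∈ J, e ∉ I ∧ spIndep n k (insert e I) := by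
  have hfinI : I.Finite := Set.toFinite _
  have hJI : ¬ (J ⊆ I) := by
    intro h
    have := Set.ncard_le_ncard h hfinI
    omega
  obtain ⟨e₁, he₁J, he₁I⟩ := Set.not_subset.mp hJI
  by_cases hsmall : I.ncard + 1 < k
  · refine ⟨e₁, he₁J, he₁I, insert_subset (hJ.1 he₁J) hI.1, ?_, Or.inl ?_⟩
    · have := Set.ncard_insert_le e₁ I
      omega
    · have := Set.ncard_insert_le e₁ I
      omega
  · -- I.ncard = k - 1, J.ncard = k, J ∉ cycleCopies
    have hIcard : I.ncard + 1 = k := by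
      have h1 := hI.2.1
      have h2 := hJ.2.1
      omega
    have hJcard : J.ncard = k := by
      have := hJ.2.1
      omega
    have hJX : J ∉ cycleCopies n k := by
      rcases hJ.2.2 with h | h
      · omega
      · exact h
    by_contra hcon
    push_neg at hcon
    have hins : ∀ e ∈ J, e ∉ I → insert e I ∈ cycleCopies n k := by
      intro e heJ heI
      have h1 := hcon e heJ heI
      have h2 : (insert e I).ncard = k := by
        rw [Set.ncard_insert_of_notMem heI hfinI]
        omega
      by_contra h3
      exact h1 ⟨insert_subset (hJ.1 heJ) hI.1, by omega, Or.inr h3⟩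
    by_cases htwo : ∃ e₂ ∈ J, e₂ ∉ I ∧ e₂ ≠ e₁
    · obtain ⟨e₂, he₂J, he₂I, hne⟩ := htwo
      exact hne (unique_completion hk he₂I he₁I (hins e₂ he₂J he₂I) (hins e₁ he₁J he₁I))
    · push_neg at htwo
      have hJsub : J ⊆ insert e₁ I := by
        intro e heJ
        by_cases heI : e ∈ I
        · exact Set.mem_insert_of_mem _ heI
        · rw [htwo e heJ heI]
          exact Set.mem_insert _ _
      have hJeq : J = insert e₁ I := by
        apply Set.eq_of_subset_of_ncard_le hJsub _ (Set.toFinite _)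
        rw [Set.ncard_insert_of_notMem he₁I hfinI]
        omega
      exact hJX (hJeq ▸ hins e₁ he₁J he₁I)

/-- The sparse paving matroid. -/
noncomputable def spM (n k : ℕ) (hk : 5 ≤ k) : Matroid (Sym2 (Fin n)) :=
  (IndepMatroid.ofFinite (Set.toFinite _) (spIndep n k) (spIndep_empty hk)
    (fun _ _ hJ hIJ => spIndep_subset hJ hIJ)
    (fun _ _ hI hJ h => spIndep_aug hk hI hJ h)
    (fun _ hI => hI.1)).matroid

@[simp] lemma spM_indep (hk : 5 ≤ k) {I : Set (Sym2 (Fin n))} :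
    (spM n k hk).Indep I ↔ spIndep n k I := by
  rw [spM]
  simp [IndepMatroid.matroid_indep_iff]

lemma spM_isXMatroid (hk : 5 ≤ k) :
    IsXMatroid (⊤ : SimpleGraph (Fin n)).edgeSet (cycleCopies n k) (spM n k hk) := by
  constructor
  · rw [spM]; rfl
  · intro C hC
    have hCk : C.ncard = k := cycle_ncard hk hC
    refine ⟨?_, ?_, ?_⟩
    · rw [show (spM n k hk).E = (⊤ : SimpleGraph (Fin n)).edgeSet from rfl]
      exact cycle_subset_E hk hC
    · rw [spM_indep hk]
      rintro ⟨-, -, h⟩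
      rcases h with h | h
      · omega
      · exact h hC
    · intro e he
      rw [spM_indep hk]
      have hdiff : (C \ {e}).ncard = k - 1 := by
        rw [Set.ncard_diff_singleton_of_mem he, hCk]
      exact ⟨Set.diff_subset.trans (cycle_subset_E hk hC), by omega, Or.inl (by omega)⟩

end sparse

end CkAux

namespace CkAux

open Set Function

section graphic

variable {n k : ℕ}

/-- The GF(2) incidence vector of an edge. -/
noncomputable def phi (n : ℕ) : Sym2 (Fin n) → (Fin n → ZMod 2) :=
  Sym2.lift ⟨fun a b => Pi.single a 1 + Pi.single b 1, fun a b => add_comm _ _⟩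

lemma phi_mk (a b : Fin n) : phi n s(a, b) = Pi.single a 1 + Pi.single b 1 := by
  rw [phi, Sym2.lift_mk]

/-- Independence in the graphic matroid of `K_n` over GF(2). -/
def grIndep (n : ℕ) (I : Set (Sym2 (Fin n))) : Prop :=
  I ⊆ (⊤ : SimpleGraph (Fin n)).edgeSet ∧
    LinearIndependent (ZMod 2) (fun x : I => phi n x.val)

lemma grIndep_empty : grIndep n ∅ := by
  refine ⟨Set.empty_subset _, ?_⟩
  haveI : IsEmpty (↥(∅ : Set (Sym2 (Fin n)))) := by
    simp only [Set.isEmpty_coe_sort]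
  exact linearIndependent_empty_type

lemma grIndep_subset {I J : Set (Sym2 (Fin n))} (hJ : grIndep n J) (hIJ : I ⊆ J) :
    grIndep n I := by
  refine ⟨hIJ.trans hJ.1, ?_⟩
  have := hJ.2.comp (Set.inclusion hIJ) (Set.inclusion_injective hIJ)
  exact this

lemma grIndep_aug {I J : Set (Sym2 (Fin n))} (hI : grIndep n I) (hJ : grIndep n J)
    (hlt : I.ncard < J.ncard) : ∃ e ∈ J, e ∉ I ∧ grIndep n (insert e I) := by
  classical
  by_contra hcon
  push_neg at hcon
  haveI : Fact (Nat.Prime 2) := ⟨Nat.prime_two⟩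
  have hspan : ∀ e ∈ J, phi n e ∈ Submodule.span (ZMod 2) (phi n '' I) := by
    intro e he
    by_cases heI : e ∈ I
    · exact Submodule.subset_span ⟨e, heI, rfl⟩
    · have hni := hcon e he heI
      rw [grIndep] at hni
      push_neg at hni
      have hlin := hni (Set.insert_subset (hJ.1 he) hI.1)
      rw [← LinearIndepOn, linearIndepOn_insert heI] at hlin
      by_contra hsp
      exact hlin ⟨hI.2, hsp⟩
  haveI : Fintype ↥I := (Set.toFinite I).fintype
  haveI : Fintype ↥J := (Set.toFinite J).fintype
  haveI : Fintype ↥(phi n '' I) := (Set.toFinite _).fintype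
  have hr1 : Module.finrank (ZMod 2)
      (Submodule.span (ZMod 2) (Set.range fun x : J => phi n x.val)) = J.ncard := by
    rw [finrank_span_eq_card hJ.2, ← Nat.card_coe_set_eq, Nat.card_eq_fintype_card]
  have hrange : (Set.range fun x : J => phi n x.val) = phi n '' J := by
    rw [← Set.image_eq_range]
  have hmono : Submodule.span (ZMod 2) (phi n '' J) ≤ Submodule.span (ZMod 2) (phi n '' I) := by
    rw [Submodule.span_le]
    rintro v ⟨e, he, rfl⟩
    exact hspan e he
  have hr2 : Module.finrank (ZMod 2) (Submodule.span (ZMod 2) (phi n '' I)) ≤ I.ncard := by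
    refine (finrank_span_le_card (R := ZMod 2) (phi n '' I)).trans ?_
    rw [← Set.ncard_eq_toFinset_card']
    exact Set.ncard_image_le (Set.toFinite I)
  have hr3 := Submodule.finrank_mono hmono
  rw [hrange] at hr1
  omega

lemma grDep_cycle (hk : 5 ≤ k) {C : Set (Sym2 (Fin n))} (hC : C ∈ cycleCopies n k) :
    ¬ LinearIndependent (ZMod 2) (fun x : C => phi n x.val) := by
  classical
  haveI : NeZero k := ⟨by omega⟩
  obtain ⟨f, hCf⟩ := hC
  haveI : Fintype ↥C := (Set.toFinite C).fintype
  rw [Fintype.not_linearIndependent_iff]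
  have hmem : ∀ i : ZMod k, em f i ∈ C := by
    intro i; rw [hCf]; exact ⟨i, rfl⟩
  have hb : Function.Bijective (fun i : ZMod k => (⟨em f i, hmem i⟩ : ↥C)) := by
    constructor
    · intro i j hij
      exact em_injective hk f (congrArg Subtype.val hij)
    · rintro ⟨e, he⟩
      have : e ∈ Set.range (em f) := by rw [← hCf]; exact he
      obtain ⟨i, hi⟩ := this
      exact ⟨i, Subtype.ext hi⟩
  refine ⟨fun _ => 1, ?_, ?_⟩
  · have hsum1 : ∑ x : ↥C, (1 : ZMod 2) • phi n x.val = ∑ x : ↥C, phi n x.val := by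
      simp
    rw [hsum1]
    have hsum2 : ∑ x : ↥C, phi n x.val = ∑ i : ZMod k, phi n (em f i) :=
      (Fintype.sum_bijective _ hb (fun i => phi n (em f i)) (fun x => phi n x.val)
        (fun i => rfl)).symm
    rw [hsum2]
    have h1 : ∀ i : ZMod k, phi n (em f i) = Pi.single (f i) 1 + Pi.single (f (i + 1)) 1 :=
      fun i => phi_mk _ _
    calc ∑ i : ZMod k, phi n (em f i)
        = (∑ i : ZMod k, Pi.single (f i) (1 : ZMod 2))
            + ∑ i : ZMod k, Pi.single (f (i + 1)) (1 : ZMod 2) := by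
          rw [← Finset.sum_add_distrib]
          exact Finset.sum_congr rfl (fun i _ => h1 i)
      _ = (∑ i : ZMod k, Pi.single (f i) (1 : ZMod 2))
            + ∑ i : ZMod k, Pi.single (f i) (1 : ZMod 2) := by
          congr 1
          exact Fintype.sum_equiv (Equiv.addRight 1) _ _ (fun i => rfl)
      _ = 0 := by
          rw [← two_smul (ZMod 2)]
          have h2 : (2 : ZMod 2) = 0 := by decide
          rw [h2, zero_smul]
  · have hne : Nonempty ↥C := ⟨⟨em f 0, hmem 0⟩⟩
    obtain ⟨x⟩ := hne
    exact ⟨x, one_ne_zero⟩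

end graphic

end CkAux

namespace CkAux

open Set Function

section graphic2

variable {n k : ℕ}

lemma zmod_cast_val (hk : 5 ≤ k) (a : ZMod k) : ((a.val : ℕ) : ZMod k) = a := by
  haveI : NeZero k := ⟨by omega⟩
  exact ZMod.natCast_rightInverse a

lemma single_family_indep (ι : Type*) [Fintype ι] [DecidableEq ι] :
    LinearIndependent (ZMod 2) (fun t : ι => (Pi.single t 1 : ι → ZMod 2)) := by
  have hb := (Pi.basisFun (ZMod 2) ι).linearIndependent
  have heq : (fun t : ι => (Pi.single t 1 : ι → ZMod 2)) = ⇑(Pi.basisFun (ZMod 2) ι) := by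
    funext t
    rw [Pi.basisFun_apply]
  rw [heq]
  exact hb

lemma path_indep (hk : 5 ≤ k) (f : ZMod k ↪ Fin n) (i₀ : ZMod k) :
    LinearIndependent (ZMod 2)
      (fun x : ↥(Set.range (em f) \ {em f i₀}) => phi n x.val) := by
  classical
  haveI : NeZero k := ⟨by omega⟩
  set x : ℕ → Fin n := fun t => f (i₀ + 1 + (t : ZMod k)) with hxdef
  have xinj : ∀ {s t : ℕ}, s < k → t < k → x s = x t → s = t := by
    intro s t hs ht h
    have h1 : i₀ + 1 + (s : ZMod k) = i₀ + 1 + (t : ZMod k) := f.injective h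
    exact natCast_inj hk hs ht (add_left_cancel h1)
  set w : Fin (k - 1) → (Fin n → ZMod 2) :=
    fun t => Pi.single (x t.val) 1 + Pi.single (x (t.val + 1)) 1 with hwdef
  have hwind : LinearIndependent (ZMod 2) w := by
    set π : (Fin n → ZMod 2) →ₗ[ZMod 2] (Fin (k - 1) → ZMod 2) :=
      LinearMap.pi (fun τ : Fin (k - 1) =>
        ∑ s ∈ Finset.range (τ.val + 1), LinearMap.proj (x s)) with hπ
    apply LinearIndependent.of_comp π
    have hcomp : ⇑π ∘ w = fun t : Fin (k - 1) => (Pi.single t 1 : Fin (k - 1) → ZMod 2) := by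
      funext t τ
      simp only [Function.comp_apply, hπ, LinearMap.pi_apply, LinearMap.coe_sum,
        Finset.sum_apply, LinearMap.proj_apply]
      have hval : ∀ s ∈ Finset.range (τ.val + 1),
          w t (x s) = (if s = t.val then (1 : ZMod 2) else 0)
            + (if s = t.val + 1 then (1 : ZMod 2) else 0) := by
        intro s hs
        rw [Finset.mem_range] at hs
        have hsk : s < k := by have := τ.isLt; omega
        rw [hwdef]
        simp only [Pi.add_apply, Pi.single_apply]
        congr 1
        · by_cases h : s = t.val
          · rw [if_pos (by rw [h]), if_pos h]
          · rw [if_neg (show x s ≠ x t.val from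
              fun hc => h (xinj hsk (by have := t.isLt; omega) hc)), if_neg h]
        · by_cases h : s = t.val + 1
          · rw [if_pos (by rw [h]), if_pos h]
          · rw [if_neg (show x s ≠ x (t.val + 1) from
              fun hc => h (xinj hsk (by have := t.isLt; omega) hc)), if_neg h]
      rw [Finset.sum_congr rfl hval, Finset.sum_add_distrib,
        Finset.sum_ite_eq' (Finset.range (τ.val + 1)) t.val (fun _ => (1 : ZMod 2)),
        Finset.sum_ite_eq' (Finset.range (τ.val + 1)) (t.val + 1) (fun _ => (1 : ZMod 2)),
        Pi.single_apply]
      simp only [Finset.mem_range]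
      rcases lt_trichotomy τ.val t.val with h | h | h
      · rw [if_neg (by omega), if_neg (by omega),
          if_neg (show τ ≠ t from fun hc => absurd (congrArg Fin.val hc) (by omega))]
        norm_num
      · rw [if_pos (by omega), if_neg (by omega), if_pos (Fin.ext h)]
        norm_num
      · rw [if_pos (by omega), if_pos (by omega),
          if_neg (show τ ≠ t from fun hc => absurd (congrArg Fin.val hc) (by omega))]
        decide
    rw [hcomp]
    exact single_family_indep (Fin (k - 1))
  have hedge : ∀ t : Fin (k - 1),
      s(x t.val, x (t.val + 1)) = em f (i₀ + 1 + (t.val : ZMod k)) := by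
    intro t
    simp only [hxdef]
    have h2 : i₀ + 1 + ((t.val + 1 : ℕ) : ZMod k) = i₀ + 1 + (t.val : ZMod k) + 1 := by
      push_cast
      ring
    show s(f (i₀ + 1 + ((t.val : ℕ) : ZMod k)), f (i₀ + 1 + ((t.val + 1 : ℕ) : ZMod k)))
        = s(f (i₀ + 1 + (t.val : ZMod k)), f (i₀ + 1 + (t.val : ZMod k) + 1))
    rw [h2]
  have hmem : ∀ t : Fin (k - 1), s(x t.val, x (t.val + 1)) ∈ Set.range (em f) \ {em f i₀} := by
    intro t
    constructor
    · exact ⟨i₀ + 1 + (t.val : ZMod k), (hedge t).symm⟩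
    · intro hc
      rw [Set.mem_singleton_iff] at hc
      have hj := em_injective hk f ((hedge t).symm.trans hc)
      have h3 : (1 : ZMod k) + (t.val : ZMod k) = 0 := by
        have h4 : i₀ + ((1 : ZMod k) + (t.val : ZMod k)) = i₀ + 0 := by
          calc i₀ + ((1 : ZMod k) + (t.val : ZMod k)) = i₀ + 1 + (t.val : ZMod k) := by ring
            _ = i₀ := hj
            _ = i₀ + 0 := by rw [add_zero]
        exact add_left_cancel h4
      have h5 : ((t.val + 1 : ℕ) : ZMod k) = 0 := by
        push_cast
        rw [add_comm]
        exact h3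
      exact natCast_ne_zero hk (by omega) (by have := t.isLt; omega) h5
  have hsurj : ∀ z : ↥(Set.range (em f) \ {em f i₀}),
      ∃ t : Fin (k - 1), (⟨s(x t.val, x (t.val + 1)), hmem t⟩ :
        ↥(Set.range (em f) \ {em f i₀})) = z := by
    rintro ⟨e, ⟨⟨j, hj⟩, hne⟩⟩
    have hji : j ≠ i₀ := by
      intro hc
      apply hne
      rw [Set.mem_singleton_iff, ← hj, hc]
    have ht0k : (j - (i₀ + 1)).val < k := ZMod.val_lt _
    have ht0ne : (j - (i₀ + 1)).val ≠ k - 1 := by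
      intro hc
      apply hji
      have h1 : (((j - (i₀ + 1)).val : ℕ) : ZMod k) = j - (i₀ + 1) := zmod_cast_val hk _
      rw [hc] at h1
      have h3 : (1 : ZMod k) + ((k - 1 : ℕ) : ZMod k) = 0 := by
        have h4 : ((1 + (k - 1) : ℕ) : ZMod k) = ((k : ℕ) : ZMod k) := by congr 1; omega
        rw [ZMod.natCast_self] at h4
        push_cast at h4
        exact h4
      have h2 : j = i₀ + (1 + ((k - 1 : ℕ) : ZMod k)) := by
        rw [h1]
        ring
      rw [h2, h3, add_zero]
    refine ⟨⟨(j - (i₀ + 1)).val, by omega⟩, ?_⟩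
    apply Subtype.ext
    show s(x (j - (i₀ + 1)).val, x ((j - (i₀ + 1)).val + 1)) = e
    rw [← hj]
    have hxt : x (j - (i₀ + 1)).val = f j := by
      show f (i₀ + 1 + (((j - (i₀ + 1)).val : ℕ) : ZMod k)) = f j
      congr 1
      rw [zmod_cast_val hk]
      ring
    have hxt1 : x ((j - (i₀ + 1)).val + 1) = f (j + 1) := by
      show f (i₀ + 1 + (((j - (i₀ + 1)).val + 1 : ℕ) : ZMod k)) = f (j + 1)
      congr 1
      push_cast
      rw [zmod_cast_val hk]
      ring
    rw [hxt, hxt1]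
  let eq1 : Fin (k - 1) ≃ ↥(Set.range (em f) \ {em f i₀}) :=
    Equiv.ofBijective (fun t => ⟨s(x t.val, x (t.val + 1)), hmem t⟩)
      ⟨by
        intro t t' h
        have h2 := congrArg Subtype.val h
        rw [Sym2.eq_iff] at h2
        have h1 : t.val < k := by have := t.isLt; omega
        have h1' : t'.val < k := by have := t'.isLt; omega
        rcases h2 with ⟨ha, _⟩ | ⟨ha, hb⟩
        · exact Fin.ext (xinj h1 h1' ha)
        · have e1 : t.val = t'.val + 1 := xinj h1 (by omega) ha
          have e2 : t.val + 1 = t'.val := xinj (by omega) h1' hb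
          omega, hsurj⟩
  have hcomp2 : (fun z : ↥(Set.range (em f) \ {em f i₀}) => phi n z.val) ∘ ⇑eq1 = w := by
    funext t
    show phi n s(x t.val, x (t.val + 1)) = w t
    rw [phi_mk, hwdef]
  exact (linearIndependent_equiv' eq1 hcomp2).mp hwind

lemma gr_circuit (hk : 5 ≤ k) {C : Set (Sym2 (Fin n))} (hC : C ∈ cycleCopies n k)
    {e : Sym2 (Fin n)} (he : e ∈ C) : grIndep n (C \ {e}) := by
  have hCE := cycle_subset_E hk hC
  obtain ⟨f, rfl⟩ := hC
  obtain ⟨i₀, rfl⟩ := he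
  exact ⟨Set.diff_subset.trans hCE, path_indep hk f i₀⟩

lemma star_indep (v0 : Fin n) (Ws : Set (Fin n)) (hW : ∀ w ∈ Ws, w ≠ v0) :
    LinearIndependent (ZMod 2)
      (fun x : ↥((fun w => s(v0, w)) '' Ws) => phi n x.val) := by
  classical
  have hinjOn : Set.InjOn (fun w => s(v0, w)) Ws := by
    intro a ha b hb h
    rw [Sym2.eq_iff] at h
    rcases h with ⟨_, h⟩ | ⟨h1, h2⟩
    · exact h
    · exact absurd h1.symm (hW b hb)
  haveI : Fintype ↥Ws := (Set.toFinite Ws).fintype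
  have hfam : LinearIndependent (ZMod 2) (fun w : ↥Ws => phi n s(v0, w.val)) := by
    set π : (Fin n → ZMod 2) →ₗ[ZMod 2] (↥Ws → ZMod 2) :=
      LinearMap.pi (fun w : ↥Ws => LinearMap.proj w.val) with hπ
    apply LinearIndependent.of_comp π
    have hcomp : ⇑π ∘ (fun w : ↥Ws => phi n s(v0, w.val))
        = fun w : ↥Ws => (Pi.single w 1 : ↥Ws → ZMod 2) := by
      funext w w'
      simp only [Function.comp_apply, hπ, LinearMap.pi_apply, LinearMap.proj_apply, phi_mk,
        Pi.add_apply, Pi.single_apply]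
      rw [if_neg (hW w'.val w'.2), zero_add]
      by_cases h : w' = w
      · rw [if_pos (by rw [h]), if_pos h]
      · rw [if_neg (fun hc => h (Subtype.ext hc)), if_neg h]
    rw [hcomp]
    exact single_family_indep ↥Ws
  let eq1 : ↥Ws ≃ ↥((fun w => s(v0, w)) '' Ws) := Equiv.Set.imageOfInjOn _ _ hinjOn
  have hcomp2 : (fun x : ↥((fun w => s(v0, w)) '' Ws) => phi n x.val) ∘ ⇑eq1
      = fun w : ↥Ws => phi n s(v0, w.val) := by
    funext w'
    rfl
  exact (linearIndependent_equiv' eq1 hcomp2).mp hfam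

/-- The graphic matroid of `K_n` (over GF(2)). -/
noncomputable def grM (n : ℕ) : Matroid (Sym2 (Fin n)) :=
  (IndepMatroid.ofFinite (Set.toFinite _) (grIndep n) grIndep_empty
    (fun _ _ hJ hIJ => grIndep_subset hJ hIJ)
    (fun _ _ hI hJ h => grIndep_aug hI hJ h)
    (fun _ hI => hI.1)).matroid

lemma grM_indep {I : Set (Sym2 (Fin n))} : (grM n).Indep I ↔ grIndep n I := by
  rw [grM]
  simp [IndepMatroid.matroid_indep_iff]

lemma grM_isXMatroid (hk : 5 ≤ k) :
    IsXMatroid (⊤ : SimpleGraph (Fin n)).edgeSet (cycleCopies n k) (grM n) := by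
  constructor
  · rw [grM]
    rfl
  · intro C hC
    refine ⟨?_, ?_, ?_⟩
    · rw [show (grM n).E = (⊤ : SimpleGraph (Fin n)).edgeSet from rfl]
      exact cycle_subset_E hk hC
    · rw [grM_indep]
      intro h
      exact grDep_cycle hk hC h.2
    · intro e he
      rw [grM_indep]
      exact gr_circuit hk hC he

end graphic2

end CkAux

namespace CkAux

open Set Function

section explicitc

variable {n k : ℕ}

lemma npos (hk : 5 ≤ k) (hn2 : 2 * k - 2 ≤ n) : 0 < n := by omega

/-- The `j`-th vertex. -/
def Vt (hn : 0 < n) (j : ℕ) : Fin n := ⟨j % n, Nat.mod_lt _ hn⟩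

lemma Vt_val (hn : 0 < n) {j : ℕ} (hj : j < n) : (Vt hn j).val = j := Nat.mod_eq_of_lt hj

lemma Vt_inj (hn : 0 < n) {i j : ℕ} (hi : i < n) (hj : j < n) (h : Vt hn i = Vt hn j) :
    i = j := by
  have h2 := congrArg Fin.val h
  rwa [Vt_val hn hi, Vt_val hn hj] at h2

lemma Vt_ne (hn : 0 < n) {i j : ℕ} (hi : i < n) (hj : j < n) (hne : i ≠ j) :
    Vt hn i ≠ Vt hn j := fun h => hne (Vt_inj hn hi hj h)

variable (hk : 5 ≤ k) (hn2 : 2 * k - 2 ≤ n)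

/-- First chord. -/
def c₁ : Sym2 (Fin n) := s(Vt (npos hk hn2) 0, Vt (npos hk hn2) 2)

/-- Second chord. -/
def c₂ : Sym2 (Fin n) := s(Vt (npos hk hn2) 1, Vt (npos hk hn2) 3)

/-- The path `0 - 1 - ⋯ - (k-2)`. -/
def Pset : Set (Sym2 (Fin n)) :=
  Set.range (fun j : Fin (k - 2) => s(Vt (npos hk hn2) j.val, Vt (npos hk hn2) (j.val + 1)))

/-- `I₁`: the path plus the two chords, `k` edges on `k-1` vertices. -/
def I₁ : Set (Sym2 (Fin n)) := Pset hk hn2 ∪ {c₁ hk hn2, c₂ hk hn2}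

/-- The outside vertices. -/
def Bset : Set (Fin n) :=
  Set.range (fun t : Fin (k - 1) => Vt (npos hk hn2) (k - 1 + t.val))

def Wset : Set (Fin n) := {Vt (npos hk hn2) 1, Vt (npos hk hn2) 2} ∪ Bset hk hn2

/-- `I₂`: a star at vertex `0` with `k+1` edges. -/
def I₂ : Set (Sym2 (Fin n)) := (fun w => s(Vt (npos hk hn2) 0, w)) '' Wset hk hn2

lemma I₁_support : ∀ e ∈ I₁ hk hn2, ∀ v : Fin n, v ∈ e → v.val < k - 1 := by
  rintro e he v hv
  rcases he with ⟨j, rfl⟩ | he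
  · have hj := j.isLt
    rw [Sym2.mem_iff] at hv
    rcases hv with rfl | rfl
    · rw [Vt_val _ (by omega)]; omega
    · rw [Vt_val _ (by omega)]; omega
  · rw [Set.mem_insert_iff, Set.mem_singleton_iff] at he
    rcases he with rfl | rfl
    · rw [c₁, Sym2.mem_iff] at hv
      rcases hv with rfl | rfl
      · rw [Vt_val _ (by omega)]; omega
      · rw [Vt_val _ (by omega)]; omega
    · rw [c₂, Sym2.mem_iff] at hv
      rcases hv with rfl | rfl
      · rw [Vt_val _ (by omega)]; omega
      · rw [Vt_val _ (by omega)]; omega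

lemma I₁_subset_E : I₁ hk hn2 ⊆ (⊤ : SimpleGraph (Fin n)).edgeSet := by
  rintro e he
  rcases he with ⟨j, rfl⟩ | he
  · rw [SimpleGraph.mem_edgeSet, SimpleGraph.top_adj]
    exact Vt_ne _ (by have := j.isLt; omega) (by have := j.isLt; omega) (by omega)
  · rw [Set.mem_insert_iff, Set.mem_singleton_iff] at he
    rcases he with rfl | rfl
    · rw [c₁, SimpleGraph.mem_edgeSet, SimpleGraph.top_adj]
      exact Vt_ne _ (by omega) (by omega) (by omega)
    · rw [c₂, SimpleGraph.mem_edgeSet, SimpleGraph.top_adj]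
      exact Vt_ne _ (by omega) (by omega) (by omega)

lemma Pset_ncard : (Pset hk hn2).ncard = k - 2 := by
  have hinj : Function.Injective
      (fun j : Fin (k - 2) => s(Vt (npos hk hn2) j.val, Vt (npos hk hn2) (j.val + 1))) := by
    intro j j' h
    rw [Sym2.eq_iff] at h
    have hj := j.isLt
    have hj' := j'.isLt
    rcases h with ⟨h1, _⟩ | ⟨h1, h2⟩
    · exact Fin.ext (Vt_inj _ (by omega) (by omega) h1)
    · have e1 : j.val = j'.val + 1 := Vt_inj _ (by omega) (by omega) h1
      have e2 : j.val + 1 = j'.val := Vt_inj _ (by omega) (by omega) h2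
      omega
  rw [Pset, ← Set.image_univ, Set.ncard_image_of_injective _ hinj, Set.ncard_univ,
    Nat.card_eq_fintype_card, Fintype.card_fin]

lemma c₁_ne_c₂ : c₁ hk hn2 ≠ c₂ hk hn2 := by
  rw [c₁, c₂]
  intro h
  rw [Sym2.eq_iff] at h
  rcases h with ⟨h1, _⟩ | ⟨h1, _⟩
  · exact absurd (Vt_inj _ (by omega) (by omega) h1) (by omega)
  · exact absurd (Vt_inj _ (by omega) (by omega) h1) (by omega)

lemma c₁_not_mem_Pset : c₁ hk hn2 ∉ Pset hk hn2 := by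
  rintro ⟨j, hj⟩
  rw [c₁, Sym2.eq_iff] at hj
  have hjlt := j.isLt
  rcases hj with ⟨h1, h2⟩ | ⟨h1, h2⟩
  · have e1 : j.val = 0 := Vt_inj _ (by omega) (by omega) h1
    have e2 : j.val + 1 = 2 := Vt_inj _ (by omega) (by omega) h2
    omega
  · have e1 : j.val = 2 := Vt_inj _ (by omega) (by omega) h1
    have e2 : j.val + 1 = 0 := Vt_inj _ (by omega) (by omega) h2
    omega

lemma c₂_not_mem_Pset : c₂ hk hn2 ∉ Pset hk hn2 := by
  rintro ⟨j, hj⟩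
  rw [c₂, Sym2.eq_iff] at hj
  have hjlt := j.isLt
  rcases hj with ⟨h1, h2⟩ | ⟨h1, h2⟩
  · have e1 : j.val = 1 := Vt_inj _ (by omega) (by omega) h1
    have e2 : j.val + 1 = 3 := Vt_inj _ (by omega) (by omega) h2
    omega
  · have e1 : j.val = 3 := Vt_inj _ (by omega) (by omega) h1
    have e2 : j.val + 1 = 1 := Vt_inj _ (by omega) (by omega) h2
    omega

lemma I₁_ncard : (I₁ hk hn2).ncard = k := by
  have hdisj : Disjoint (Pset hk hn2) {c₁ hk hn2, c₂ hk hn2} := by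
    rw [Set.disjoint_right]
    intro x hx
    rw [Set.mem_insert_iff, Set.mem_singleton_iff] at hx
    rcases hx with rfl | rfl
    · exact c₁_not_mem_Pset hk hn2
    · exact c₂_not_mem_Pset hk hn2
  rw [I₁, Set.ncard_union_eq hdisj (Set.toFinite _) (Set.toFinite _), Pset_ncard,
    Set.ncard_pair (c₁_ne_c₂ hk hn2)]
  omega

lemma I₁_not_cycle : I₁ hk hn2 ∉ cycleCopies n k :=
  fun h => cycle_support hk h (I₁_support hk hn2)

lemma I₁_spIndep : spIndep n k (I₁ hk hn2) :=
  ⟨I₁_subset_E hk hn2, le_of_eq (I₁_ncard hk hn2), Or.inr (I₁_not_cycle hk hn2)⟩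

lemma Wset_ne_zero : ∀ w ∈ Wset hk hn2, w ≠ Vt (npos hk hn2) 0 := by
  intro w hw
  rcases hw with hw | ⟨t, rfl⟩
  · rw [Set.mem_insert_iff, Set.mem_singleton_iff] at hw
    rcases hw with rfl | rfl
    · exact Vt_ne _ (by omega) (by omega) (by omega)
    · exact Vt_ne _ (by omega) (by omega) (by omega)
  · exact Vt_ne _ (by have := t.isLt; omega) (by omega) (by omega)

lemma Wset_ncard : (Wset hk hn2).ncard = k + 1 := by
  have hBinj : Function.Injective
      (fun t : Fin (k - 1) => Vt (npos hk hn2) (k - 1 + t.val)) := by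
    intro t t' h
    have ht := t.isLt
    have ht' := t'.isLt
    have := Vt_inj _ (by omega) (by omega) h
    exact Fin.ext (by omega)
  have hB : (Bset hk hn2).ncard = k - 1 := by
    rw [Bset, ← Set.image_univ, Set.ncard_image_of_injective _ hBinj, Set.ncard_univ,
      Nat.card_eq_fintype_card, Fintype.card_fin]
  have hdisj : Disjoint ({Vt (npos hk hn2) 1, Vt (npos hk hn2) 2} : Set (Fin n))
      (Bset hk hn2) := by
    rw [Set.disjoint_left]
    intro x hx hx2
    obtain ⟨t, ht⟩ := hx2
    have htlt := t.isLt
    rw [Set.mem_insert_iff, Set.mem_singleton_iff] at hx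
    rcases hx with rfl | rfl
    · have := Vt_inj _ (by omega) (by omega) ht
      omega
    · have := Vt_inj _ (by omega) (by omega) ht
      omega
  rw [Wset, Set.ncard_union_eq hdisj (Set.toFinite _) (Set.toFinite _),
    Set.ncard_pair (Vt_ne _ (by omega) (by omega) (by omega)), hB]
  omega

lemma I₂_ncard : (I₂ hk hn2).ncard = k + 1 := by
  have hinj : Set.InjOn (fun w => s(Vt (npos hk hn2) 0, w)) (Wset hk hn2) := by
    intro a ha b hb h
    rw [Sym2.eq_iff] at h
    rcases h with ⟨_, h⟩ | ⟨h1, _⟩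
    · exact h
    · exact absurd h1.symm (Wset_ne_zero hk hn2 b hb)
  rw [I₂, Set.ncard_image_of_injOn hinj, Wset_ncard]

lemma I₂_subset_E : I₂ hk hn2 ⊆ (⊤ : SimpleGraph (Fin n)).edgeSet := by
  rintro e ⟨w, hw, rfl⟩
  rw [SimpleGraph.mem_edgeSet, SimpleGraph.top_adj]
  exact fun h => (Wset_ne_zero hk hn2 w hw) h.symm

lemma I₂_grIndep : grIndep n (I₂ hk hn2) :=
  ⟨I₂_subset_E hk hn2, star_indep _ _ (Wset_ne_zero hk hn2)⟩

lemma I₂_diff {e : Sym2 (Fin n)} (he : e ∈ I₂ hk hn2) (heI : e ∉ I₁ hk hn2) :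
    ∃ b : Fin n, k - 1 ≤ b.val ∧ e = s(Vt (npos hk hn2) 0, b) := by
  obtain ⟨w, hw, rfl⟩ := he
  rcases hw with hw | ⟨t, rfl⟩
  · exfalso
    rw [Set.mem_insert_iff, Set.mem_singleton_iff] at hw
    rcases hw with rfl | rfl
    · exact heI (Or.inl ⟨⟨0, by omega⟩, rfl⟩)
    · exact heI (Or.inr (Set.mem_insert _ _))
  · refine ⟨Vt (npos hk hn2) (k - 1 + t.val), ?_, rfl⟩
    rw [Vt_val _ (by have := t.isLt; omega)]
    omega

lemma e0b_not_mem_I₁ {b : Fin n} (hb : k - 1 ≤ b.val) :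
    s(Vt (npos hk hn2) 0, b) ∉ I₁ hk hn2 := by
  intro h
  have := I₁_support hk hn2 _ h b (Sym2.mem_mk_right _ _)
  omega

lemma A_ncard {b : Fin n} (hb : k - 1 ≤ b.val) :
    (insert (s(Vt (npos hk hn2) 0, b)) (I₁ hk hn2)).ncard = k + 1 := by
  rw [Set.ncard_insert_of_notMem (e0b_not_mem_I₁ hk hn2 hb) (Set.toFinite _),
    I₁_ncard]

end explicitc

end CkAux

namespace CkAux

open Set Function

section cycles

variable {n k : ℕ}

lemma cast_ne_cast (hk : 5 ≤ k) {a b : ℕ} (ha : a < k) (hb : b < k) (h : a ≠ b) :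
    ((a : ℕ) : ZMod k) ≠ ((b : ℕ) : ZMod k) := fun hc => h (natCast_inj hk ha hb hc)

lemma swap_at_zero (hk : 5 ≤ k) :
    Equiv.swap (((1 : ℕ) : ZMod k)) (((2 : ℕ) : ZMod k)) ((0 : ℕ) : ZMod k)
      = ((0 : ℕ) : ZMod k) :=
  Equiv.swap_apply_of_ne_of_ne (cast_ne_cast hk (by omega) (by omega) (by omega))
    (cast_ne_cast hk (by omega) (by omega) (by omega))

lemma swap_at_three (hk : 5 ≤ k) :
    Equiv.swap (((1 : ℕ) : ZMod k)) (((2 : ℕ) : ZMod k)) ((3 : ℕ) : ZMod k)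
      = ((3 : ℕ) : ZMod k) :=
  Equiv.swap_apply_of_ne_of_ne (cast_ne_cast hk (by omega) (by omega) (by omega))
    (cast_ne_cast hk (by omega) (by omega) (by omega))

lemma cast_succ_eq (a : ℕ) : ((a : ℕ) : ZMod k) + 1 = ((a + 1 : ℕ) : ZMod k) := by
  push_cast
  ring

variable (hk : 5 ≤ k) (hn2 : 2 * k - 2 ≤ n)


/-- The embedding of the cycle `0, 1, …, k-2, b`. -/
def gEmb (b : Fin n) (hb : k - 1 ≤ b.val) : ZMod k ↪ Fin n :=
  ⟨fun i => if i.val < k - 1 then Vt (npos hk hn2) i.val else b, by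
    haveI : NeZero k := ⟨by omega⟩
    intro i j h
    simp only at h
    by_cases hi : i.val < k - 1 <;> by_cases hj : j.val < k - 1
    · rw [if_pos hi, if_pos hj] at h
      exact zmod_val_inj hk (Vt_inj _ (by omega) (by omega) h)
    · rw [if_pos hi, if_neg hj] at h
      have := congrArg Fin.val h
      rw [Vt_val _ (by omega)] at this
      omega
    · rw [if_neg hi, if_pos hj] at h
      have := congrArg Fin.val h
      rw [Vt_val _ (by omega)] at this
      omega
    · have h1 := ZMod.val_lt i
      have h2 := ZMod.val_lt j
      exact zmod_val_inj hk (by omega)⟩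

lemma gEmb_small (b : Fin n) (hb : k - 1 ≤ b.val) {j : ℕ} (hj : j < k - 1) :
    gEmb hk hn2 b hb ((j : ℕ) : ZMod k) = Vt (npos hk hn2) j := by
  show (if (((j : ℕ) : ZMod k)).val < k - 1 then _ else _) = _
  rw [natCast_val_lt hk (by omega), if_pos hj]

lemma gEmb_last (b : Fin n) (hb : k - 1 ≤ b.val) :
    gEmb hk hn2 b hb (((k - 1 : ℕ) : ZMod k)) = b := by
  show (if ((((k - 1 : ℕ)) : ZMod k)).val < k - 1 then _ else _) = _
  rw [natCast_val_lt hk (by omega), if_neg (by omega)]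

/-- The first certificate cycle. -/
def Y₁ (b : Fin n) (hb : k - 1 ≤ b.val) : Set (Sym2 (Fin n)) :=
  Set.range (em (gEmb hk hn2 b hb))

lemma Y₁_mem (b : Fin n) (hb : k - 1 ≤ b.val) : Y₁ hk hn2 b hb ∈ cycleCopies n k :=
  ⟨gEmb hk hn2 b hb, rfl⟩

/-- The second certificate cycle: the first with vertices `1` and `2` swapped. -/
def hEmb (b : Fin n) (hb : k - 1 ≤ b.val) : ZMod k ↪ Fin n :=
  (Equiv.swap (((1 : ℕ) : ZMod k)) (((2 : ℕ) : ZMod k))).toEmbedding.trans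
    (gEmb hk hn2 b hb)

def Y₂ (b : Fin n) (hb : k - 1 ≤ b.val) : Set (Sym2 (Fin n)) :=
  Set.range (em (hEmb hk hn2 b hb))

lemma Y₂_mem (b : Fin n) (hb : k - 1 ≤ b.val) : Y₂ hk hn2 b hb ∈ cycleCopies n k :=
  ⟨hEmb hk hn2 b hb, rfl⟩

lemma hEmb_apply (b : Fin n) (hb : k - 1 ≤ b.val) (i : ZMod k) :
    hEmb hk hn2 b hb i
      = gEmb hk hn2 b hb (Equiv.swap (((1 : ℕ) : ZMod k)) (((2 : ℕ) : ZMod k)) i) := rfl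

lemma Pset_subset_Y₁ (b : Fin n) (hb : k - 1 ≤ b.val) :
    Pset hk hn2 ⊆ Y₁ hk hn2 b hb := by
  rintro e ⟨j, rfl⟩
  have hj := j.isLt
  refine ⟨((j.val : ℕ) : ZMod k), ?_⟩
  rw [em, cast_succ_eq, gEmb_small hk hn2 b hb (by omega), gEmb_small hk hn2 b hb (by omega)]

lemma e0b_mem_Y₁ (b : Fin n) (hb : k - 1 ≤ b.val) :
    s(Vt (npos hk hn2) 0, b) ∈ Y₁ hk hn2 b hb := by
  refine ⟨(((k - 1 : ℕ)) : ZMod k), ?_⟩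
  have hcast : (((k - 1 : ℕ)) : ZMod k) + 1 = ((0 : ℕ) : ZMod k) := by
    rw [cast_succ_eq]
    have : ((k - 1 + 1 : ℕ) : ZMod k) = ((k : ℕ) : ZMod k) := by congr 1; omega
    rw [this, ZMod.natCast_self, Nat.cast_zero]
  rw [em, hcast, gEmb_last hk hn2 b hb, gEmb_small hk hn2 b hb (by omega)]
  exact Sym2.eq_swap

lemma c₁_mem_Y₂ (b : Fin n) (hb : k - 1 ≤ b.val) : c₁ hk hn2 ∈ Y₂ hk hn2 b hb := by
  refine ⟨((0 : ℕ) : ZMod k), ?_⟩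
  rw [em, hEmb_apply, cast_succ_eq, hEmb_apply, swap_at_zero hk]
  rw [show ((0 + 1 : ℕ) : ZMod k) = ((1 : ℕ) : ZMod k) by norm_num]
  rw [Equiv.swap_apply_left]
  rw [gEmb_small hk hn2 b hb (by omega), gEmb_small hk hn2 b hb (by omega), c₁]

lemma c₂_mem_Y₂ (b : Fin n) (hb : k - 1 ≤ b.val) : c₂ hk hn2 ∈ Y₂ hk hn2 b hb := by
  refine ⟨((2 : ℕ) : ZMod k), ?_⟩
  rw [em, hEmb_apply, cast_succ_eq, hEmb_apply, Equiv.swap_apply_right, swap_at_three hk]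
  rw [gEmb_small hk hn2 b hb (by omega), gEmb_small hk hn2 b hb (by omega), c₂]

lemma Y₂_sub (b : Fin n) (hb : k - 1 ≤ b.val) :
    Y₂ hk hn2 b hb ⊆ Y₁ hk hn2 b hb ∪ {c₁ hk hn2, c₂ hk hn2} := by
  rintro e ⟨i, rfl⟩
  by_cases hi0 : i = ((0 : ℕ) : ZMod k)
  · subst hi0
    right
    have : em (hEmb hk hn2 b hb) ((0 : ℕ) : ZMod k) = c₁ hk hn2 := by
      rw [em, hEmb_apply, cast_succ_eq, hEmb_apply, swap_at_zero hk]
      rw [show ((0 + 1 : ℕ) : ZMod k) = ((1 : ℕ) : ZMod k) by norm_num]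
      rw [Equiv.swap_apply_left]
      rw [gEmb_small hk hn2 b hb (by omega), gEmb_small hk hn2 b hb (by omega), c₁]
    rw [this]
    exact Set.mem_insert _ _
  by_cases hi1 : i = ((1 : ℕ) : ZMod k)
  · subst hi1
    left
    have h12 : ((1 : ℕ) : ZMod k) + 1 = ((2 : ℕ) : ZMod k) := by push_cast; ring
    have hL : em (hEmb hk hn2 b hb) ((1 : ℕ) : ZMod k)
        = s(Vt (npos hk hn2) 2, Vt (npos hk hn2) 1) := by
      rw [em, hEmb_apply, h12, hEmb_apply, Equiv.swap_apply_left, Equiv.swap_apply_right,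
        gEmb_small hk hn2 b hb (show (2 : ℕ) < k - 1 by omega),
        gEmb_small hk hn2 b hb (show (1 : ℕ) < k - 1 by omega)]
    have hR : em (gEmb hk hn2 b hb) ((1 : ℕ) : ZMod k)
        = s(Vt (npos hk hn2) 1, Vt (npos hk hn2) 2) := by
      rw [em, h12, gEmb_small hk hn2 b hb (show (1 : ℕ) < k - 1 by omega),
        gEmb_small hk hn2 b hb (show (2 : ℕ) < k - 1 by omega)]
    refine ⟨((1 : ℕ) : ZMod k), ?_⟩
    rw [hL, hR]
    exact Sym2.eq_swap
  by_cases hi2 : i = ((2 : ℕ) : ZMod k)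
  · subst hi2
    right
    have : em (hEmb hk hn2 b hb) ((2 : ℕ) : ZMod k) = c₂ hk hn2 := by
      rw [em, hEmb_apply, cast_succ_eq, hEmb_apply, Equiv.swap_apply_right, swap_at_three hk]
      rw [gEmb_small hk hn2 b hb (by omega), gEmb_small hk hn2 b hb (by omega), c₂]
    rw [this]
    exact Set.mem_insert_of_mem _ (Set.mem_singleton _)
  · left
    have hs1 : Equiv.swap (((1 : ℕ) : ZMod k)) (((2 : ℕ) : ZMod k)) i = i :=
      Equiv.swap_apply_of_ne_of_ne hi1 hi2
    have hs2 : Equiv.swap (((1 : ℕ) : ZMod k)) (((2 : ℕ) : ZMod k)) (i + 1) = i + 1 := by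
      apply Equiv.swap_apply_of_ne_of_ne
      · intro hc
        apply hi0
        have : ((1 : ℕ) : ZMod k) = ((0 : ℕ) : ZMod k) + 1 := by push_cast; ring
        rw [this] at hc
        exact add_right_cancel hc
      · intro hc
        apply hi1
        have : ((2 : ℕ) : ZMod k) = ((1 : ℕ) : ZMod k) + 1 := by push_cast; ring
        rw [this] at hc
        exact add_right_cancel hc
    refine ⟨i, ?_⟩
    rw [em, em, hEmb_apply, hEmb_apply, hs1, hs2]

lemma A_sub (b : Fin n) (hb : k - 1 ≤ b.val) :
    insert (s(Vt (npos hk hn2) 0, b)) (I₁ hk hn2)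
      ⊆ Y₁ hk hn2 b hb ∪ {c₁ hk hn2, c₂ hk hn2} := by
  intro e he
  rcases he with rfl | he
  · exact Or.inl (e0b_mem_Y₁ hk hn2 b hb)
  · rcases he with hP | hc
    · exact Or.inl (Pset_subset_Y₁ hk hn2 b hb hP)
    · exact Or.inr hc

end cycles

end CkAux

namespace CkAux

lemma choose_bound {n k : ℕ} (hk : 5 ≤ k) (hn : (k - 1).choose 2 + 2 ≤ n) :
    2 * k - 2 ≤ n := by
  rw [Nat.choose_two_right] at hn
  have h3 : 4 * (k - 1 - 1) ≤ (k - 1) * (k - 1 - 1) :=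
    Nat.mul_le_mul_right _ (by omega)
  omega

end CkAux

theorem two_maximal_Ck_matroids (k n : ℕ) (hk : 5 ≤ k) (hn : (k - 1).choose 2 + 2 ≤ n) :
    ∃ M₁ M₂ : Matroid (Sym2 (Fin n)), M₁ ≠ M₂ ∧
      (IsXMatroid (⊤ : SimpleGraph (Fin n)).edgeSet (cycleCopies n k) M₁ ∧
        ∀ N : Matroid (Sym2 (Fin n)),
          IsXMatroid (⊤ : SimpleGraph (Fin n)).edgeSet (cycleCopies n k) N →
            WeakLE M₁ N → WeakLE N M₁) ∧
      (IsXMatroid (⊤ : SimpleGraph (Fin n)).edgeSet (cycleCopies n k) M₂ ∧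
        ∀ N : Matroid (Sym2 (Fin n)),
          IsXMatroid (⊤ : SimpleGraph (Fin n)).edgeSet (cycleCopies n k) N →
            WeakLE M₂ N → WeakLE N M₂) := by
  classical
  have hn2 : 2 * k - 2 ≤ n := CkAux.choose_bound hk hn
  obtain ⟨M₁, hM₁X, hM₁ge, hM₁max⟩ :=
    CkAux.exists_maximal_xmatroid (⊤ : SimpleGraph (Fin n)).edgeSet (cycleCopies n k)
      (CkAux.grM_isXMatroid hk)
  obtain ⟨M₂, hM₂X, hM₂ge, hM₂max⟩ :=
    CkAux.exists_maximal_xmatroid (⊤ : SimpleGraph (Fin n)).edgeSet (cycleCopies n k)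
      (CkAux.spM_isXMatroid hk)
  refine ⟨M₁, M₂, ?_, ⟨hM₁X, fun N hN h1 => hM₁max N hN h1⟩,
    ⟨hM₂X, fun N hN h1 => hM₂max N hN h1⟩⟩
  intro heq
  have hI1 : M₁.Indep (CkAux.I₁ hk hn2) := by
    rw [heq]
    exact hM₂ge _ ((CkAux.spM_indep hk).mpr (CkAux.I₁_spIndep hk hn2))
  have hI2 : M₁.Indep (CkAux.I₂ hk hn2) :=
    hM₁ge _ (CkAux.grM_indep.mpr (CkAux.I₂_grIndep hk hn2))
  have hcard : (CkAux.I₁ hk hn2).encard < (CkAux.I₂ hk hn2).encard := by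
    rw [← (Set.toFinite _).cast_ncard_eq, ← (Set.toFinite _).cast_ncard_eq,
      CkAux.I₁_ncard hk hn2, CkAux.I₂_ncard hk hn2]
    exact_mod_cast (by omega : k < k + 1)
  obtain ⟨e, he, hei⟩ := hI1.augment hI2 hcard
  obtain ⟨b, hb, rfl⟩ := CkAux.I₂_diff hk hn2 he.1 he.2
  exact CkAux.cert_dep hk hM₁X (CkAux.Y₁_mem hk hn2 b hb) (CkAux.Y₂_mem hk hn2 b hb)
    (CkAux.c₁_mem_Y₂ hk hn2 b hb) (CkAux.c₂_mem_Y₂ hk hn2 b hb) (CkAux.Y₂_sub hk hn2 b hb)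
    (CkAux.A_sub hk hn2 b hb) (le_of_eq (CkAux.A_ncard hk hn2 hb).symm) hei
end

section
/- Let M be a matroid on E(K_n) in which every copy of K₄ is a circuit and which has the 0-extension property. Then every circuit of M induces a 2-connected subgraph of K_n. -/
open Set

variable {α : Type*}

/-- The matroid `M` on the edge set of `G` has the 0-extension property: adding a new vertex
(one not incident to the given independent set) joined by two edges to distinct vertices
preserves independence. -/
def ZeroExtProperty {V : Type*} (G : SimpleGraph V) (M : Matroid (Sym2 V)) : Prop :=
  ∀ F : Set (Sym2 V), M.Indep F → ∀ v₀ v₁ v₂ : V, v₁ ≠ v₂ → v₀ ∉ verts F →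
    G.Adj v₀ v₁ → G.Adj v₀ v₂ → M.Indep (F ∪ {s(v₀, v₁), s(v₀, v₂)})

/-- A set of edges induces a 2-connected graph: any splitting of the edges into two nonempty
parts shares at least two vertices. -/
def TwoConnEdgeSet {V : Type*} (C : Set (Sym2 V)) : Prop :=
  ∀ X Y : Set (Sym2 V), X ∪ Y = C → Disjoint X Y → X.Nonempty → Y.Nonempty →
    2 ≤ (verts X ∩ verts Y).ncard
/-- The edge sets of subgraphs of `K_n` isomorphic to a graph `H` on `s` vertices. -/
def graphCopies {s : ℕ} (H : SimpleGraph (Fin s)) (n : ℕ) : Set (Set (Sym2 (Fin n))) :=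
  {F | ∃ φ : Fin s ↪ Fin n, F = Sym2.map φ '' H.edgeSet}

namespace K4Aux

variable {n : ℕ} {M : Matroid (Sym2 (Fin n))}

lemma verts_union (F G : Set (Sym2 (Fin n))) : verts (F ∪ G) = verts F ∪ verts G := by
  ext v
  constructor
  · rintro ⟨e, (he | he), hv⟩
    · exact Or.inl ⟨e, he, hv⟩
    · exact Or.inr ⟨e, he, hv⟩
  · rintro (⟨e, he, hv⟩ | ⟨e, he, hv⟩)
    · exact ⟨e, Or.inl he, hv⟩
    · exact ⟨e, Or.inr he, hv⟩

lemma verts_pair_subset (a b c d : Fin n) : verts {s(a,b), s(c,d)} ⊆ {a, b, c, d} := by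
  rintro v ⟨e, (rfl | rfl), hv⟩ <;> rcases Sym2.mem_iff.1 hv with rfl | rfl <;> simp

lemma verts_single_subset (a b : Fin n) : verts {s(a,b)} ⊆ {a, b} := by
  rintro v ⟨e, rfl, hv⟩
  rcases Sym2.mem_iff.1 hv with rfl | rfl <;> simp

/-- Fan: join every vertex of `S` to both poles `p` and `q`. -/
def fan (S : Set (Fin n)) (p q : Fin n) : Set (Sym2 (Fin n)) := ⋃ z ∈ S, {s(z,p), s(z,q)}

lemma verts_fan_subset (S : Set (Fin n)) (p q : Fin n) : verts (fan S p q) ⊆ S ∪ {p, q} := by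
  rintro v ⟨e, he, hv⟩
  simp only [fan, mem_iUnion, exists_prop] at he
  obtain ⟨z, hz, (rfl | rfl)⟩ := he <;> rcases Sym2.mem_iff.1 hv with rfl | rfl <;> simp [hz]

lemma fan_empty (p q : Fin n) : fan (∅ : Set (Fin n)) p q = ∅ := by simp [fan]

lemma fan_insert (a : Fin n) (S : Set (Fin n)) (p q : Fin n) :
    fan (insert a S) p q = {s(a,p), s(a,q)} ∪ fan S p q := by
  simp [fan, Set.biUnion_insert]

lemma mem_fan_left {z : Fin n} {S : Set (Fin n)} (hz : z ∈ S) (p q : Fin n) :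
    s(z,p) ∈ fan S p q := by
  simp only [fan, mem_iUnion, exists_prop]
  exact ⟨z, hz, by simp⟩

lemma mem_fan_right {z : Fin n} {S : Set (Fin n)} (hz : z ∈ S) (p q : Fin n) :
    s(z,q) ∈ fan S p q := by
  simp only [fan, mem_iUnion, exists_prop]
  exact ⟨z, hz, by simp⟩

/-- adding a fan to an independent set keeps it independent. -/
lemma indep_union_fan (hze : ZeroExtProperty (⊤ : SimpleGraph (Fin n)) M)
    {F : Set (Sym2 (Fin n))} {p q : Fin n} (hpq : p ≠ q) (hF : M.Indep F)
    (S : Set (Fin n)) (hS : ∀ z ∈ S, z ∉ verts F ∧ z ≠ p ∧ z ≠ q) :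
    M.Indep (F ∪ fan S p q) := by
  apply Set.Finite.induction_on_subset (motive := fun s _ => M.Indep (F ∪ fan s p q)) S (Set.toFinite S)
  · simpa [fan_empty] using hF
  · intro a S' haS hS'S haS' hIH
    have haP := hS a haS
    have hav : a ∉ verts (F ∪ fan S' p q) := by
      rw [verts_union]
      rintro (h | h)
      · exact haP.1 h
      · rcases verts_fan_subset S' p q h with h' | h'
        · exact haS' h'
        · rcases h' with rfl | h'
          · exact haP.2.1 rfl
          · exact haP.2.2 (by simpa using h')
    have := hze _ hIH a p q hpq hav (by simpa using haP.2.1) (by simpa using haP.2.2)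
    rw [fan_insert]
    convert this using 1
    rw [Set.union_assoc, Set.union_comm (fan S' p q)]

lemma indep_pair (hze : ZeroExtProperty (⊤ : SimpleGraph (Fin n)) M)
    {u v w : Fin n} (huv : u ≠ v) (huw : u ≠ w) (hvw : v ≠ w) :
    M.Indep {s(u,v), s(u,w)} := by
  have := hze ∅ M.empty_indep u v w hvw (by simp [verts]) (by simpa using huv)
    (by simpa using huw)
  simpa using this

lemma indep_single (hze : ZeroExtProperty (⊤ : SimpleGraph (Fin n)) M)
    {u v w : Fin n} (huv : u ≠ v) (huw : u ≠ w) (hvw : v ≠ w) :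
    M.Indep {s(u,v)} :=
  (indep_pair hze huv huw hvw).subset (by simp)


lemma encard_le_of_indep_subset_closure {I J : Set (Sym2 (Fin n))} (hI : M.Indep I)
    (hJ : M.Indep J) (hIJ : I ⊆ M.closure J) : I.encard ≤ J.encard := by
  by_contra h
  push_neg at h
  obtain ⟨e, he, hind⟩ := hJ.augment hI h
  have hcl : e ∈ M.closure J := hIJ he.1
  rw [hJ.mem_closure_iff_of_notMem he.2] at hcl
  exact hcl.not_indep hind

section K4

variable {p q a b : Fin n}

lemma inj4 (hpq : p ≠ q) (hpa : p ≠ a) (hpb : p ≠ b)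
    (hqa : q ≠ a) (hqb : q ≠ b) (hab : a ≠ b) :
    Function.Injective ![p, q, a, b] := by
  intro i j hij
  fin_cases i <;> fin_cases j <;> simp_all <;>
    first
      | rfl
      | exact absurd hij (by tauto)
      | exact absurd hij.symm (by tauto)

lemma k4_image_subset (φ : Fin 4 ↪ Fin n) :
    Sym2.map φ '' (⊤ : SimpleGraph (Fin 4)).edgeSet ⊆
      {s(φ 0, φ 1), s(φ 0, φ 2), s(φ 0, φ 3), s(φ 1, φ 2), s(φ 1, φ 3), s(φ 2, φ 3)} := by
  rintro e ⟨x, hx, rfl⟩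
  induction x using Sym2.ind with
  | _ i j =>
    rw [SimpleGraph.edgeSet_top, Set.mem_compl_iff, Sym2.mem_diagSet, Sym2.mk_isDiag_iff] at hx
    rw [Sym2.map_pair_eq]
    fin_cases i <;> fin_cases j <;> simp_all [Sym2.eq_swap]

variable (hM : IsXMatroid (⊤ : SimpleGraph (Fin n)).edgeSet
      (graphCopies (⊤ : SimpleGraph (Fin 4)) n) M)
include hM

/-- The key consequence of K4 copies being circuits. -/
lemma k4_closure (hpq : p ≠ q) (hpa : p ≠ a) (hpb : p ≠ b)
    (hqa : q ≠ a) (hqb : q ≠ b) (hab : a ≠ b) :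
    s(a,b) ∈ M.closure {s(p,q), s(a,p), s(b,p), s(a,q), s(b,q)} := by
  set S5 : Set (Sym2 (Fin n)) := {s(p,q), s(a,p), s(b,p), s(a,q), s(b,q)} with hS5
  set φ : Fin 4 ↪ Fin n := ⟨![p, q, a, b], inj4 hpq hpa hpb hqa hqb hab⟩ with hφ
  have hφ0 : φ 0 = p := rfl
  have hφ1 : φ 1 = q := rfl
  have hφ2 : φ 2 = a := rfl
  have hφ3 : φ 3 = b := rfl
  set K : Set (Sym2 (Fin n)) := Sym2.map φ '' (⊤ : SimpleGraph (Fin 4)).edgeSet with hK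
  have hcirc : M.IsCircuit' K := hM.2 K ⟨φ, rfl⟩
  have hmem : s(a,b) ∈ K := by
    refine ⟨s((2 : Fin 4), (3 : Fin 4)), ?_, ?_⟩
    · rw [SimpleGraph.edgeSet_top, Set.mem_compl_iff, Sym2.mem_diagSet, Sym2.mk_isDiag_iff]
      decide
    · rw [Sym2.map_pair_eq, hφ2, hφ3]
  have hKsub : K ⊆ insert (s(a,b)) S5 := by
    refine (k4_image_subset φ).trans ?_
    rw [hφ0, hφ1, hφ2, hφ3]
    intro e he
    simp only [Set.mem_insert_iff, Set.mem_singleton_iff] at he ⊢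
    rcases he with h | h | h | h | h | h <;>
      simp [h, hS5, Sym2.eq_swap]
  have hind : M.Indep (K \ {s(a,b)}) := hcirc.2.2 _ hmem
  have hdep : M.Dep (insert (s(a,b)) (K \ {s(a,b)})) := by
    rw [Set.insert_diff_singleton, Set.insert_eq_of_mem hmem]
    exact ⟨hcirc.2.1, hcirc.1⟩
  have h1 : s(a,b) ∈ M.closure (K \ {s(a,b)}) :=
    (hind.mem_closure_iff_of_notMem (by simp)).2 hdep
  refine M.closure_subset_closure ?_ h1
  intro e he
  rcases hKsub he.1 with h | h
  · exact absurd h he.2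
  · exact h

end K4

/-- Edges with both endpoints in `U`. -/
def edgesWithin (U : Set (Fin n)) : Set (Sym2 (Fin n)) :=
  {e | ¬ e.IsDiag ∧ ∀ v ∈ e, v ∈ U}

/-- A spanning "double fan" on vertex set `U` with poles `p`, `q`. -/
def doubleFan (U : Set (Fin n)) (p q : Fin n) : Set (Sym2 (Fin n)) :=
  insert s(p,q) (fan (U \ {p,q}) p q)

lemma doubleFan_subset_edgesWithin {U : Set (Fin n)} {p q : Fin n}
    (hp : p ∈ U) (hq : q ∈ U) (hpq : p ≠ q) :
    doubleFan U p q ⊆ edgesWithin U := by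
  rintro e (rfl | he)
  · exact ⟨by simp [hpq], by intro v hv; rcases Sym2.mem_iff.1 hv with rfl | rfl <;> assumption⟩
  · simp only [fan, mem_iUnion, exists_prop] at he
    obtain ⟨z, hz, (rfl | rfl)⟩ := he
    · exact ⟨by simp only [Sym2.mk_isDiag_iff]; exact fun h => hz.2 (by simp [h]), by intro v hv; rcases Sym2.mem_iff.1 hv with rfl | rfl
        <;> [exact hz.1; exact hp]⟩
    · exact ⟨by simp only [Sym2.mk_isDiag_iff]; exact fun h => hz.2 (by simp [h]), by intro v hv; rcases Sym2.mem_iff.1 hv with rfl | rfl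
        <;> [exact hz.1; exact hq]⟩

lemma edgesWithin_subset_ground
    (hM : IsXMatroid (⊤ : SimpleGraph (Fin n)).edgeSet
      (graphCopies (⊤ : SimpleGraph (Fin 4)) n) M) (U : Set (Fin n)) :
    edgesWithin U ⊆ M.E := by
  rw [hM.1, SimpleGraph.edgeSet_top]
  exact fun e he => he.1

section Span

variable (hM : IsXMatroid (⊤ : SimpleGraph (Fin n)).edgeSet
      (graphCopies (⊤ : SimpleGraph (Fin 4)) n) M)
include hM

lemma edgesWithin_subset_closure_doubleFan {U : Set (Fin n)} {p q : Fin n}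
    (hp : p ∈ U) (hq : q ∈ U) (hpq : p ≠ q) :
    edgesWithin U ⊆ M.closure (doubleFan U p q) := by
  have hDE : doubleFan U p q ⊆ M.E :=
    (doubleFan_subset_edgesWithin hp hq hpq).trans (edgesWithin_subset_ground hM U)
  have hcl : doubleFan U p q ⊆ M.closure (doubleFan U p q) := M.subset_closure _ hDE
  intro e he
  induction e using Sym2.ind with
  | _ x y =>
    have hxy : x ≠ y := by
      have := he.1; rwa [Sym2.mk_isDiag_iff] at this
    have hxU : x ∈ U := he.2 x (by simp)
    have hyU : y ∈ U := he.2 y (by simp)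
    by_cases hxp : x = p
    · subst hxp
      by_cases hyq : y = q
      · subst hyq; exact hcl (Set.mem_insert _ _)
      · have : y ∈ U \ {x, q} := ⟨hyU, by simp [hyq, Ne.symm hxy]⟩
        exact hcl (Or.inr (by rw [Sym2.eq_swap]; exact mem_fan_left this x q))
    · by_cases hxq : x = q
      · subst hxq
        by_cases hyp : y = p
        · subst hyp; exact hcl (Set.mem_insert_iff.2 (Or.inl (Sym2.eq_swap ▸ rfl)))
        · have : y ∈ U \ {p, x} := ⟨hyU, by simp [hyp, Ne.symm hxy]⟩
          exact hcl (Or.inr (by rw [Sym2.eq_swap]; exact mem_fan_right this p x))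
      · -- x is not a pole
        by_cases hyp : y = p
        · subst hyp
          have : x ∈ U \ {y, q} := ⟨hxU, by simp [hxp, hxq]⟩
          exact hcl (Or.inr (mem_fan_left this y q))
        · by_cases hyq : y = q
          · subst hyq
            have : x ∈ U \ {p, y} := ⟨hxU, by simp [hxp, hxq]⟩
            exact hcl (Or.inr (mem_fan_right this p y))
          · -- both x and y off the poles : use the K4 circuit
            have hx' : x ∈ U \ {p, q} := ⟨hxU, by simp [hxp, hxq]⟩
            have hy' : y ∈ U \ {p, q} := ⟨hyU, by simp [hyp, hyq]⟩
            have h5 : ({s(p,q), s(x,p), s(y,p), s(x,q), s(y,q)} : Set (Sym2 (Fin n)))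
                ⊆ doubleFan U p q := by
              intro f hf
              simp only [Set.mem_insert_iff, Set.mem_singleton_iff] at hf
              rcases hf with rfl | rfl | rfl | rfl | rfl
              · exact Set.mem_insert _ _
              · exact Or.inr (mem_fan_left hx' p q)
              · exact Or.inr (mem_fan_left hy' p q)
              · exact Or.inr (mem_fan_right hx' p q)
              · exact Or.inr (mem_fan_right hy' p q)
            have := k4_closure (M := M) hM hpq (Ne.symm hxp) (Ne.symm hyp)
              (Ne.symm hxq) (Ne.symm hyq) hxy
            exact M.closure_subset_closure h5 this

end Span

section Endgame

variable (hM : IsXMatroid (⊤ : SimpleGraph (Fin n)).edgeSet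
      (graphCopies (⊤ : SimpleGraph (Fin 4)) n) M)
include hM

lemma contra_of_indep_doubleFans {C X Y : Set (Sym2 (Fin n))}
    (hC : M.IsCircuit' C) (hXY : X ∪ Y = C) (hXne : X.Nonempty) (hYne : Y.Nonempty)
    (hdisj : Disjoint X Y)
    (hsmall : ∀ a ∈ verts X ∩ verts Y, ∀ b ∈ verts X ∩ verts Y, a = b)
    {p₀ p₁ q₀ q₁ : Fin n} (hp₀ : p₀ ∈ verts X) (hp₁ : p₁ ∈ verts X) (hpne : p₀ ≠ p₁)
    (hq₀ : q₀ ∈ verts Y) (hq₁ : q₁ ∈ verts Y) (hqne : q₀ ≠ q₁)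
    (hT : M.Indep (doubleFan (verts X) p₀ p₁ ∪ doubleFan (verts Y) q₀ q₁)) : False := by
  set U := verts X with hU
  set W := verts Y with hW
  have hXC : X ⊆ C := hXY ▸ Set.subset_union_left
  have hYC : Y ⊆ C := hXY ▸ Set.subset_union_right
  have hnd : ∀ e ∈ C, ¬ e.IsDiag := by
    intro e he
    have := hC.1 he
    rwa [hM.1, SimpleGraph.edgeSet_top] at this
  have hXA : X ⊆ edgesWithin U := fun e he => ⟨hnd e (hXC he), fun v hv => ⟨e, he, hv⟩⟩
  have hYB : Y ⊆ edgesWithin W := fun e he => ⟨hnd e (hYC he), fun v hv => ⟨e, he, hv⟩⟩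
  have hAB : Disjoint (edgesWithin U) (edgesWithin W) := by
    rw [Set.disjoint_left]
    intro e heA heB
    induction e using Sym2.ind with
    | _ x y =>
      have hxy : x ≠ y := by
        have := heA.1; rwa [Sym2.mk_isDiag_iff] at this
      exact hxy (hsmall x ⟨heA.2 x (by simp), heB.2 x (by simp)⟩
        y ⟨heA.2 y (by simp), heB.2 y (by simp)⟩)
  have hTU_basis : M.IsBasis (doubleFan U p₀ p₁) (edgesWithin U) :=
    (hT.subset Set.subset_union_left).isBasis_of_subset_of_subset_closure
      (doubleFan_subset_edgesWithin hp₀ hp₁ hpne)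
      (edgesWithin_subset_closure_doubleFan hM hp₀ hp₁ hpne)
  have hTW_basis : M.IsBasis (doubleFan W q₀ q₁) (edgesWithin W) :=
    (hT.subset Set.subset_union_right).isBasis_of_subset_of_subset_closure
      (doubleFan_subset_edgesWithin hq₀ hq₁ hqne)
      (edgesWithin_subset_closure_doubleFan hM hq₀ hq₁ hqne)
  obtain ⟨f, hf⟩ := hYne
  have hXind : M.Indep X := by
    refine (hC.2.2 f (hYC hf)).subset fun e he => ⟨hXC he, ?_⟩
    simp only [Set.mem_singleton_iff]
    exact fun h => (Set.disjoint_left.1 hdisj he) (h ▸ hf)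
  obtain ⟨g, hg⟩ := hXne
  have hYind : M.Indep Y := by
    refine (hC.2.2 g (hXC hg)).subset fun e he => ⟨hYC he, ?_⟩
    simp only [Set.mem_singleton_iff]
    exact fun h => (Set.disjoint_left.1 hdisj (h ▸ hg)) he
  obtain ⟨BU, hBU, hXBU⟩ := hXind.subset_isBasis_of_subset hXA (edgesWithin_subset_ground hM U)
  obtain ⟨BW, hBW, hYBW⟩ := hYind.subset_isBasis_of_subset hYB (edgesWithin_subset_ground hM W)
  have hBUW_E : BU ∪ BW ⊆ M.E :=
    Set.union_subset hBU.indep.subset_ground hBW.indep.subset_ground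
  obtain ⟨J, hJ⟩ := M.exists_isBasis (BU ∪ BW) hBUW_E
  have hTcl : doubleFan U p₀ p₁ ∪ doubleFan W q₀ q₁ ⊆ M.closure J := by
    rw [hJ.closure_eq_closure]
    refine Set.union_subset ?_ ?_
    · exact fun e he => M.closure_subset_closure Set.subset_union_left
        (hBU.subset_closure (doubleFan_subset_edgesWithin hp₀ hp₁ hpne he))
    · exact fun e he => M.closure_subset_closure Set.subset_union_right
        (hBW.subset_closure (doubleFan_subset_edgesWithin hq₀ hq₁ hqne he))
  have h1 : (doubleFan U p₀ p₁ ∪ doubleFan W q₀ q₁).encard ≤ J.encard :=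
    encard_le_of_indep_subset_closure hT hJ.indep hTcl
  have hdTT : Disjoint (doubleFan U p₀ p₁) (doubleFan W q₀ q₁) :=
    hAB.mono (doubleFan_subset_edgesWithin hp₀ hp₁ hpne)
      (doubleFan_subset_edgesWithin hq₀ hq₁ hqne)
  have hdBB : Disjoint BU BW := hAB.mono hBU.subset hBW.subset
  have h2 : (BU ∪ BW).encard ≤ J.encard := by
    rw [Set.encard_union_eq hdBB, hBU.encard_eq_encard hTU_basis,
      hBW.encard_eq_encard hTW_basis, ← Set.encard_union_eq hdTT]
    exact h1
  have hJeq : J = BU ∪ BW := (Set.toFinite _).eq_of_subset_of_encard_le hJ.subset h2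
  have hCind : M.Indep C := by
    refine (hJeq ▸ hJ.indep).subset ?_
    rw [← hXY]
    exact Set.union_subset (hXBU.trans Set.subset_union_left)
      (hYBW.trans Set.subset_union_right)
  exact hC.2.1 hCind

end Endgame

end K4Aux

open K4Aux in
theorem K4_matroid_circuits_two_connected (n : ℕ) (M : Matroid (Sym2 (Fin n)))
    (hM : IsXMatroid (⊤ : SimpleGraph (Fin n)).edgeSet
      (graphCopies (⊤ : SimpleGraph (Fin 4)) n) M)
    (hze : ZeroExtProperty (⊤ : SimpleGraph (Fin n)) M) :
    ∀ C : Set (Sym2 (Fin n)), M.IsCircuit' C → TwoConnEdgeSet C := by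
  intro C hC X Y hXY hdisj hXne hYne
  by_contra hcon
  have hsmall : ∀ a ∈ verts X ∩ verts Y, ∀ b ∈ verts X ∩ verts Y, a = b := by
    intro a ha b hb
    by_contra hab
    exact hcon ((Set.one_lt_ncard_iff (Set.toFinite _)).2 ⟨a, b, ha, hb, hab⟩)
  have hnd : ∀ e ∈ C, ¬ e.IsDiag := by
    intro e he
    have := hC.1 he
    rwa [hM.1, SimpleGraph.edgeSet_top] at this
  -- extract an edge of X with its two distinct endpoints
  obtain ⟨e, he⟩ := hXne
  obtain ⟨f, hf⟩ := hYne
  induction e using Sym2.ind with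
  | _ x₀ x₁ =>
  induction f using Sym2.ind with
  | _ y₀ y₁ =>
  have hx01 : x₀ ≠ x₁ := by
    have := hnd _ (hXY ▸ Set.subset_union_left he)
    rwa [Sym2.mk_isDiag_iff] at this
  have hy01 : y₀ ≠ y₁ := by
    have := hnd _ (hXY ▸ Set.subset_union_right hf)
    rwa [Sym2.mk_isDiag_iff] at this
  have hx₀U : x₀ ∈ verts X := ⟨_, he, by simp⟩
  have hx₁U : x₁ ∈ verts X := ⟨_, he, by simp⟩
  have hy₀W : y₀ ∈ verts Y := ⟨_, hf, by simp⟩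
  have hy₁W : y₁ ∈ verts Y := ⟨_, hf, by simp⟩
  set U := verts X with hU
  set W := verts Y with hW
  rcases Set.eq_empty_or_nonempty (U ∩ W) with hUW | ⟨v, hv⟩
  · -- U and W are vertex–disjoint
    have hUdW : ∀ z, z ∈ U → z ∈ W → False := fun z h1 h2 =>
      Set.eq_empty_iff_forall_notMem.1 hUW z ⟨h1, h2⟩
    have hxy00 : x₀ ≠ y₀ := fun h => hUdW x₀ hx₀U (h ▸ hy₀W)
    have hxy01 : x₀ ≠ y₁ := fun h => hUdW x₀ hx₀U (h ▸ hy₁W)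
    have hxy10 : x₁ ≠ y₀ := fun h => hUdW x₁ hx₁U (h ▸ hy₀W)
    have hxy11 : x₁ ≠ y₁ := fun h => hUdW x₁ hx₁U (h ▸ hy₁W)
    have h1 : M.Indep {s(x₀,x₁)} := indep_single hze hx01 hxy00 hxy10
    have h2 : M.Indep ({s(x₀,x₁)} ∪ {s(y₀,x₀), s(y₀,x₁)}) := by
      refine hze _ h1 y₀ x₀ x₁ hx01 ?_ (by simpa using hxy00.symm) (by simpa using hxy10.symm)
      intro h
      rcases verts_single_subset x₀ x₁ h with rfl | rfl
      · exact hxy00 rfl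
      · exact hxy10 rfl
    have h3 : M.Indep (({s(x₀,x₁)} ∪ {s(y₀,x₀), s(y₀,x₁)}) ∪ {s(y₁,y₀), s(y₁,x₀)}) := by
      refine hze _ h2 y₁ y₀ x₀ hxy00.symm ?_ (by simpa using hy01.symm)
        (by simpa using hxy01.symm)
      rw [verts_union]
      rintro (h | h)
      · rcases verts_single_subset x₀ x₁ h with rfl | rfl
        · exact hxy01 rfl
        · exact hxy11 rfl
      · rcases verts_pair_subset y₀ x₀ y₀ x₁ h with rfl | rfl | rfl | rfl
        · exact hy01 rfl
        · exact hxy01 rfl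
        · exact hy01 rfl
        · exact hxy11 rfl
    have h4 : M.Indep ((({s(x₀,x₁)} ∪ {s(y₀,x₀), s(y₀,x₁)}) ∪ {s(y₁,y₀), s(y₁,x₀)})
        ∪ fan (U \ {x₀,x₁}) x₀ x₁) := by
      refine indep_union_fan hze hx01 h3 _ ?_
      rintro z ⟨hzU, hz2⟩
      simp only [Set.mem_insert_iff, Set.mem_singleton_iff, not_or] at hz2
      refine ⟨?_, hz2.1, hz2.2⟩
      rw [verts_union, verts_union]
      rintro ((h | h) | h)
      · rcases verts_single_subset x₀ x₁ h with rfl | rfl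
        · exact hz2.1 rfl
        · exact hz2.2 rfl
      · rcases verts_pair_subset y₀ x₀ y₀ x₁ h with rfl | rfl | rfl | rfl
        · exact hUdW z hzU hy₀W
        · exact hz2.1 rfl
        · exact hUdW z hzU hy₀W
        · exact hz2.2 rfl
      · rcases verts_pair_subset y₁ y₀ y₁ x₀ h with rfl | rfl | rfl | rfl
        · exact hUdW z hzU hy₁W
        · exact hUdW z hzU hy₀W
        · exact hUdW z hzU hy₁W
        · exact hz2.1 rfl
    have h5 : M.Indep (((({s(x₀,x₁)} ∪ {s(y₀,x₀), s(y₀,x₁)}) ∪ {s(y₁,y₀), s(y₁,x₀)})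
        ∪ fan (U \ {x₀,x₁}) x₀ x₁) ∪ fan (W \ {y₀,y₁}) y₀ y₁) := by
      refine indep_union_fan hze hy01 h4 _ ?_
      rintro z ⟨hzW, hz2⟩
      simp only [Set.mem_insert_iff, Set.mem_singleton_iff, not_or] at hz2
      refine ⟨?_, hz2.1, hz2.2⟩
      rw [verts_union, verts_union, verts_union]
      rintro (((h | h) | h) | h)
      · rcases verts_single_subset x₀ x₁ h with rfl | rfl
        · exact hUdW z hx₀U hzW
        · exact hUdW z hx₁U hzW
      · rcases verts_pair_subset y₀ x₀ y₀ x₁ h with rfl | rfl | rfl | rfl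
        · exact hz2.1 rfl
        · exact hUdW z hx₀U hzW
        · exact hz2.1 rfl
        · exact hUdW z hx₁U hzW
      · rcases verts_pair_subset y₁ y₀ y₁ x₀ h with rfl | rfl | rfl | rfl
        · exact hz2.2 rfl
        · exact hz2.1 rfl
        · exact hz2.2 rfl
        · exact hUdW z hx₀U hzW
      · rcases verts_fan_subset _ _ _ h with h' | h'
        · exact hUdW _ h'.1 hzW
        · simp only [Set.mem_insert_iff, Set.mem_singleton_iff] at h'
          rcases h' with rfl | rfl
          · exact hUdW _ hx₀U hzW
          · exact hUdW _ hx₁U hzW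
    refine contra_of_indep_doubleFans hM hC hXY ⟨_, he⟩ ⟨_, hf⟩ hdisj hsmall
      hx₀U hx₁U hx01 hy₀W hy₁W hy01 (h5.subset ?_)
    refine Set.union_subset ?_ ?_
    · rw [doubleFan]
      refine Set.insert_subset ?_ ?_
      · exact Or.inl (Or.inl (Or.inl (Or.inl rfl)))
      · exact fun t ht => Or.inl (Or.inr ht)
    · rw [doubleFan]
      refine Set.insert_subset ?_ ?_
      · refine Or.inl (Or.inl (Or.inr ?_))
        rw [Sym2.eq_swap]
        simp
      · exact fun t ht => Or.inr ht
  · -- U and W share the vertex v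
    have hvU : v ∈ U := hv.1
    have hvW : v ∈ W := hv.2
    have hUW1 : ∀ z, z ∈ U → z ∈ W → z = v := fun z h1 h2 => hsmall z ⟨h1, h2⟩ v hv
    obtain ⟨u₁, hu₁U, hu₁v⟩ : ∃ u₁ ∈ U, u₁ ≠ v := by
      by_cases h : x₀ = v
      · exact ⟨x₁, hx₁U, fun hh => hx01 (h ▸ hh ▸ rfl)⟩
      · exact ⟨x₀, hx₀U, h⟩
    obtain ⟨w₁, hw₁W, hw₁v⟩ : ∃ w₁ ∈ W, w₁ ≠ v := by
      by_cases h : y₀ = v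
      · exact ⟨y₁, hy₁W, fun hh => hy01 (h ▸ hh ▸ rfl)⟩
      · exact ⟨y₀, hy₀W, h⟩
    have hu₁W : u₁ ∉ W := fun h => hu₁v (hUW1 u₁ hu₁U h)
    have hw₁U : w₁ ∉ U := fun h => hw₁v (hUW1 w₁ h hw₁W)
    have huw : u₁ ≠ w₁ := fun h => hu₁W (h ▸ hw₁W)
    have h1 : M.Indep {s(v,u₁)} := indep_single hze hu₁v.symm hw₁v.symm huw
    have h2 : M.Indep ({s(v,u₁)} ∪ {s(w₁,v), s(w₁,u₁)}) := by
      refine hze _ h1 w₁ v u₁ hu₁v.symm ?_ (by simpa using hw₁v) (by simpa using huw.symm)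
      intro h
      rcases verts_single_subset v u₁ h with rfl | rfl
      · exact hw₁v rfl
      · exact huw rfl
    have h3 : M.Indep (({s(v,u₁)} ∪ {s(w₁,v), s(w₁,u₁)}) ∪ fan (U \ {v,u₁}) v u₁) := by
      refine indep_union_fan hze hu₁v.symm h2 _ ?_
      rintro z ⟨hzU, hz2⟩
      simp only [Set.mem_insert_iff, Set.mem_singleton_iff, not_or] at hz2
      refine ⟨?_, hz2.1, hz2.2⟩
      rw [verts_union]
      rintro (h | h)
      · rcases verts_single_subset v u₁ h with rfl | rfl
        · exact hz2.1 rfl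
        · exact hz2.2 rfl
      · rcases verts_pair_subset w₁ v w₁ u₁ h with rfl | rfl | rfl | rfl
        · exact hw₁U hzU
        · exact hz2.1 rfl
        · exact hw₁U hzU
        · exact hz2.2 rfl
    have h4 : M.Indep ((({s(v,u₁)} ∪ {s(w₁,v), s(w₁,u₁)}) ∪ fan (U \ {v,u₁}) v u₁)
        ∪ fan (W \ {v,w₁}) v w₁) := by
      refine indep_union_fan hze hw₁v.symm h3 _ ?_
      rintro z ⟨hzW, hz2⟩
      simp only [Set.mem_insert_iff, Set.mem_singleton_iff, not_or] at hz2
      have hzU : z ∉ U := fun h => hz2.1 (hUW1 z h hzW)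
      refine ⟨?_, hz2.1, hz2.2⟩
      rw [verts_union, verts_union]
      rintro ((h | h) | h)
      · rcases verts_single_subset v u₁ h with rfl | rfl
        · exact hz2.1 rfl
        · exact hu₁W hzW
      · rcases verts_pair_subset w₁ v w₁ u₁ h with rfl | rfl | rfl | rfl
        · exact hz2.2 rfl
        · exact hz2.1 rfl
        · exact hz2.2 rfl
        · exact hu₁W hzW
      · rcases verts_fan_subset _ _ _ h with h' | h'
        · exact hzU h'.1
        · simp only [Set.mem_insert_iff, Set.mem_singleton_iff] at h'
          rcases h' with rfl | rfl
          · exact hz2.1 rfl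
          · exact hu₁W hzW
    refine contra_of_indep_doubleFans hM hC hXY ⟨_, he⟩ ⟨_, hf⟩ hdisj hsmall
      hvU hu₁U hu₁v.symm hvW hw₁W hw₁v.symm (h4.subset ?_)
    refine Set.union_subset ?_ ?_
    · rw [doubleFan]
      refine Set.insert_subset ?_ ?_
      · exact Or.inl (Or.inl (Or.inl rfl))
      · exact fun t ht => Or.inl (Or.inr ht)
    · rw [doubleFan]
      refine Set.insert_subset ?_ ?_
      · refine Or.inl (Or.inl (Or.inr ?_))
        rw [Sym2.eq_swap]
        simp
      · exact fun t ht => Or.inr ht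
end
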